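/- arXiv:2008.08367 — 3 statements merged into one kernel-verified Lean document; each statement's English description precedes it below -/
import Mathlib

section
/- Let r be a graphon with η ≤ r ≤ 1−η on [0,1]^2 for some η > 0. Then ψ_r is strictly decreasing on the interval [0, C_r] and strictly increasing on the interval [C_r, 1]. -/
open MeasureTheory Real Filter Set Topology

noncomputable section

/-- The unit interval `[0,1]` as a subset of `ℝ`. -/
def UI : Set ℝ := Set.Icc 0 1

/-- A graphon: a symmetric measurable function `[0,1]² → [0,1]`. -/
def IsGraphon (h : ℝ → ℝ → ℝ) : Prop :=
  Measurable (Function.uncurry h) ∧ (∀ x y, h x y = h y x) ∧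
    ∀ x ∈ UI, ∀ y ∈ UI, h x y ∈ Set.Icc (0:ℝ) 1

/-- The operator norm of the integral operator `T_h` on `L²([0,1])` associated with a
symmetric bounded kernel `h`, expressed via its quadratic form. -/
def gOpNorm (h : ℝ → ℝ → ℝ) : ℝ :=
  sSup {t : ℝ | ∃ u : ℝ → ℝ, Measurable u ∧ IntegrableOn (fun x => u x ^ 2) UI ∧
    (∫ x in UI, u x ^ 2) ≤ 1 ∧ t = |∫ x in UI, ∫ y in UI, u x * h x y * u y|}

/-- Relative entropy of Bernoulli(a) with respect to Bernoulli(b), with `0 log 0 = 0`. -/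
def relEnt (a b : ℝ) : ℝ :=
  a * Real.log (a / b) + (1 - a) * Real.log ((1 - a) / (1 - b))

/-- The rate function `I_r(h) = ∫∫ R(h(x,y) | r(x,y)) dx dy`. -/
def Ient (r h : ℝ → ℝ → ℝ) : ℝ := ∫ x in UI, ∫ y in UI, relEnt (h x y) (r x y)

/-- The rate function `ψ_r(β) = inf { I_r(h) : h graphon, ‖T_h‖ = β }`. -/
def psiRate (r : ℝ → ℝ → ℝ) (β : ℝ) : ℝ :=
  sInf {c : ℝ | ∃ h : ℝ → ℝ → ℝ, IsGraphon h ∧ gOpNorm h = β ∧ Ient r h = c}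

/-- The `L²([0,1]²)` norm of a kernel. -/
def L2norm2 (f : ℝ → ℝ → ℝ) : ℝ := Real.sqrt (∫ x in UI, ∫ y in UI, f x y ^ 2)

end

section Aux
open MeasureTheory

lemma UI_meas : MeasurableSet UI := measurableSet_Icc

lemma UI_vol : volume UI = 1 := by
  simp [UI, Real.volume_Icc]

instance : IsFiniteMeasure (volume.restrict UI) := by
  constructor
  rw [Measure.restrict_apply_univ, UI_vol]
  exact ENNReal.one_lt_top

lemma setIntegral_const_UI (c : ℝ) : (∫ _ in UI, c) = c := by
  rw [setIntegral_const]
  simp [Measure.real, UI_vol]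

/-- bounded measurable functions are integrable on UI -/
lemma bddIntegrableOn {f : ℝ → ℝ} (hf : Measurable f) {M : ℝ}
    (hb : ∀ x ∈ UI, |f x| ≤ M) : IntegrableOn f UI := by
  refine Integrable.mono' (integrable_const M) hf.aestronglyMeasurable ?_
  rw [ae_restrict_iff' UI_meas]
  exact Filter.Eventually.of_forall (fun x hx => by simpa using hb x hx)

/-- elementary Cauchy–Schwarz on UI -/
lemma cs1 {f g : ℝ → ℝ} (hf : Measurable f) (hg : Measurable g)
    (hf2 : IntegrableOn (fun x => f x ^ 2) UI) (hg2 : IntegrableOn (fun x => g x ^ 2) UI) :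
    (∫ x in UI, |f x * g x|) ≤ Real.sqrt (∫ x in UI, f x ^ 2) * Real.sqrt (∫ x in UI, g x ^ 2) := by
  set A := ∫ x in UI, f x ^ 2 with hA
  set B := ∫ x in UI, g x ^ 2 with hB
  have hA0 : 0 ≤ A := integral_nonneg (fun x => sq_nonneg _)
  have hB0 : 0 ≤ B := integral_nonneg (fun x => sq_nonneg _)
  have hint : IntegrableOn (fun x => |f x * g x|) UI := by
    refine Integrable.mono' ((hf2.add hg2).div_const 2) ((hf.mul hg).abs).aestronglyMeasurable ?_
    refine Filter.Eventually.of_forall (fun x => ?_)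
    simp only [Pi.add_apply, Real.norm_eq_abs, abs_abs, abs_mul]
    nlinarith [sq_nonneg (|f x| - |g x|), abs_nonneg (f x), abs_nonneg (g x), sq_abs (f x), sq_abs (g x)]
  have key : ∀ s : ℝ, 0 < s → (∫ x in UI, |f x * g x|) ≤ (s * A + B / s) / 2 := by
    intro s hs
    have hmono : (∫ x in UI, |f x * g x|) ≤ ∫ x in UI, (s * f x ^ 2 + g x ^ 2 / s) / 2 := by
      refine setIntegral_mono hint ?_ ?_
      · exact ((hf2.const_mul s).add (hg2.div_const s)).div_const 2
      · intro x
        simp only [abs_mul]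
        have hgs : g x ^ 2 / s * s = g x ^ 2 := div_mul_cancel₀ _ (ne_of_gt hs)
        nlinarith [sq_nonneg (s * |f x| - |g x|), abs_nonneg (f x), abs_nonneg (g x),
          sq_abs (f x), sq_abs (g x), mul_pos hs hs]
    calc (∫ x in UI, |f x * g x|) ≤ ∫ x in UI, (s * f x ^ 2 + g x ^ 2 / s) / 2 := hmono
      _ = (s * A + B / s) / 2 := by
          rw [integral_div]
          congr 1
          rw [integral_add (hf2.const_mul s) (hg2.div_const s), MeasureTheory.integral_const_mul, integral_div]
  rcases eq_or_lt_of_le hA0 with hA' | hA'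
  · have : (fun x => f x ^ 2) =ᵐ[volume.restrict UI] 0 := by
      refine (integral_eq_zero_iff_of_nonneg ?_ hf2).mp hA'.symm
      exact fun x => sq_nonneg _
    have hz : (fun x => |f x * g x|) =ᵐ[volume.restrict UI] 0 := by
      filter_upwards [this] with x hx
      have : f x = 0 := by
        have : f x ^ 2 = 0 := hx
        exact pow_eq_zero_iff (by norm_num) |>.mp this
      simp [this]
    rw [integral_congr_ae hz]
    simp
    positivity
  · rcases eq_or_lt_of_le hB0 with hB' | hB'
    · have : (fun x => g x ^ 2) =ᵐ[volume.restrict UI] 0 := by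
        refine (integral_eq_zero_iff_of_nonneg ?_ hg2).mp hB'.symm
        exact fun x => sq_nonneg _
      have hz : (fun x => |f x * g x|) =ᵐ[volume.restrict UI] 0 := by
        filter_upwards [this] with x hx
        have : g x = 0 := by
          have : g x ^ 2 = 0 := hx
          exact pow_eq_zero_iff (by norm_num) |>.mp this
        simp [this]
      rw [integral_congr_ae hz]
      simp
      positivity
    · have hs : 0 < Real.sqrt B / Real.sqrt A := by positivity
      have := key _ hs
      have hsA : Real.sqrt A ^ 2 = A := Real.sq_sqrt hA0
      have hsB : Real.sqrt B ^ 2 = B := Real.sq_sqrt hB0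
      have hsA' : 0 < Real.sqrt A := Real.sqrt_pos.mpr hA'
      have hsB' : 0 < Real.sqrt B := Real.sqrt_pos.mpr hB'
      have : (Real.sqrt B / Real.sqrt A * A + B / (Real.sqrt B / Real.sqrt A)) / 2
          = Real.sqrt A * Real.sqrt B := by
        field_simp
        nlinarith
      linarith [key _ hs, this ▸ key _ hs]
end Aux

section RelEnt

lemma base0 : ∀ b ∈ Set.Icc (0:ℝ) 1, b < 1 → Real.log (1-b) + 2*b^2 ≤ 0 := by
  intro b hb hb1
  rcases eq_or_lt_of_le hb.1 with h0 | h0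
  · simp [← h0]
  set φ : ℝ → ℝ := fun t => Real.log (1-t) + 2*t^2 with hφ
  have hd : ∀ t ∈ Set.Ioo (0:ℝ) b, HasDerivAt φ (-(1-t)⁻¹ + 4*t) t := by
    intro t ht
    have h1t : (1:ℝ) - t ≠ 0 := by
      have : t < 1 := lt_trans ht.2 hb1
      linarith
    have d1 : HasDerivAt (fun t : ℝ => Real.log (1-t)) ((1-t)⁻¹ * (0-1)) t :=
      (Real.hasDerivAt_log h1t).comp t ((hasDerivAt_const t (1:ℝ)).sub (hasDerivAt_id t))
    have d2 : HasDerivAt (fun t : ℝ => 2*t^2) (2*(2*t^1*1)) t :=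
      ((hasDerivAt_id t).pow 2).const_mul 2
    have := d1.add d2
    convert this using 1
    · rfl
    · rfl
    · rfl
    ring
  have hanti : AntitoneOn φ (Set.Icc 0 b) := by
    apply antitoneOn_of_deriv_nonpos (convex_Icc 0 b)
    · apply ContinuousOn.add
      · apply ContinuousOn.comp Real.continuousOn_log
        · exact (continuous_const.sub continuous_id).continuousOn
        · intro t ht
          have : t < 1 := lt_of_le_of_lt ht.2 hb1
          simp only [Set.mem_compl_iff, Set.mem_singleton_iff]
          intro h; rw [sub_eq_zero] at h; linarith
      · exact (continuous_const.mul (continuous_pow 2)).continuousOn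
    · intro t ht
      rw [interior_Icc] at ht
      exact ((hd t ht).differentiableAt).differentiableWithinAt
    · intro t ht
      rw [interior_Icc] at ht
      rw [(hd t ht).deriv]
      have ht1 : t < 1 := lt_trans ht.2 hb1
      have h1t : 0 < 1 - t := by linarith
      have key : 4*t*(1-t) ≤ 1 := by nlinarith [sq_nonneg (2*t-1)]
      have : 4*t ≤ (1-t)⁻¹ := by
        rw [inv_eq_one_div, le_div_iff₀ h1t]
        linarith
      linarith
  have h := hanti (Set.left_mem_Icc.mpr hb.1) (Set.mem_Icc.mpr ⟨hb.1, le_refl b⟩) hb.1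
  simp only [hφ] at h
  norm_num at h
  linarith

lemma base1 : ∀ b ∈ Set.Icc (0:ℝ) 1, 0 < b → Real.log b + 2*(b-1)^2 ≤ 0 := by
  intro b hb hb0
  have := base0 (1-b) (Set.mem_Icc.mpr ⟨by linarith [hb.2], by linarith⟩) (by linarith)
  have e : (1:ℝ) - (1-b) = b := by ring
  rw [e] at this
  nlinarith [this]

lemma relEnt_eq (a b : ℝ) (ha : a ∈ Set.Icc (0:ℝ) 1) (hb0 : 0 < b) (hb1 : b < 1) :
    relEnt a b = a * Real.log a + (1-a) * Real.log (1-a)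
      - a * Real.log b - (1-a) * Real.log (1-b) := by
  have hb0' : b ≠ 0 := ne_of_gt hb0
  have hb1' : (1:ℝ) - b ≠ 0 := by intro h; rw [sub_eq_zero] at h; exact absurd h.symm (ne_of_lt hb1)
  rcases eq_or_lt_of_le ha.1 with h0 | h0
  · simp [relEnt, ← h0, Real.log_div one_ne_zero hb1']
  rcases eq_or_lt_of_le ha.2 with h1 | h1
  · simp [relEnt, h1, Real.log_div one_ne_zero hb0']
    try ring
  have ha0 : a ≠ 0 := ne_of_gt h0
  have ha1 : (1:ℝ) - a ≠ 0 := by intro h; rw [sub_eq_zero] at h; exact absurd h.symm (ne_of_lt h1)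
  rw [relEnt, Real.log_div ha0 hb0', Real.log_div ha1 hb1']
  ring

/-- the core monotonicity: for a ∈ (0,1), φ(t) = a log t + (1-a) log (1-t) + 2(t-a)²
is maximized at t = a over (0,1). -/
lemma phi_max (a b : ℝ) (ha : a ∈ Set.Ioo (0:ℝ) 1) (hb : b ∈ Set.Ioo (0:ℝ) 1) :
    a * Real.log b + (1-a) * Real.log (1-b) + 2*(b-a)^2
      ≤ a * Real.log a + (1-a) * Real.log (1-a) := by
  set φ : ℝ → ℝ := fun t => a * Real.log t + (1-a) * Real.log (1-t) + 2*(t-a)^2 with hφ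
  have hd : ∀ t ∈ Set.Ioo (0:ℝ) 1, HasDerivAt φ (a * t⁻¹ - (1-a)*(1-t)⁻¹ + 4*(t-a)) t := by
    intro t ht
    have ht0 : t ≠ 0 := ne_of_gt ht.1
    have h1t : (1:ℝ) - t ≠ 0 := by intro h; rw [sub_eq_zero] at h; exact absurd h.symm (ne_of_lt ht.2)
    have d1 : HasDerivAt (fun t : ℝ => a * Real.log t) (a * t⁻¹) t :=
      (Real.hasDerivAt_log ht0).const_mul a
    have d2 : HasDerivAt (fun t : ℝ => Real.log (1-t)) ((1-t)⁻¹ * (0-1)) t :=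
      (Real.hasDerivAt_log h1t).comp t ((hasDerivAt_const t (1:ℝ)).sub (hasDerivAt_id t))
    have d2' : HasDerivAt (fun t : ℝ => (1-a) * Real.log (1-t)) ((1-a) * ((1-t)⁻¹ * (0-1))) t :=
      d2.const_mul (1-a)
    have d3 : HasDerivAt (fun t : ℝ => 2*(t-a)^2) (2*(2*(t-a)^1*1)) t :=
      (((hasDerivAt_id t).sub_const a).pow 2).const_mul 2
    have := (d1.add d2').add d3
    convert this using 1
    · rfl
    · rfl
    · rfl
    ring
  -- derivative sign
  have hsign : ∀ t ∈ Set.Ioo (0:ℝ) 1,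
      (a * t⁻¹ - (1-a)*(1-t)⁻¹ + 4*(t-a)) = -((t-a) * (2*t-1)^2) / (t*(1-t)) := by
    intro t ht
    have ht0 : (0:ℝ) < t := ht.1
    have h1t : (0:ℝ) < 1 - t := by linarith [ht.2]
    field_simp
    ring
  rcases lt_trichotomy b a with hba | hba | hba
  · -- b < a : φ monotone on [b,a]
    have hmono : MonotoneOn φ (Set.Icc b a) := by
      apply monotoneOn_of_deriv_nonneg (convex_Icc b a)
      · apply ContinuousOn.add
        apply ContinuousOn.add
        · apply ContinuousOn.mul continuousOn_const
          apply ContinuousOn.comp Real.continuousOn_log continuous_id.continuousOn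
          intro t ht
          simp only [Set.mem_compl_iff, Set.mem_singleton_iff, id]
          have : 0 < t := lt_of_lt_of_le hb.1 ht.1
          exact ne_of_gt this
        · apply ContinuousOn.mul continuousOn_const
          apply ContinuousOn.comp Real.continuousOn_log
            (continuous_const.sub continuous_id).continuousOn
          intro t ht
          simp only [Set.mem_compl_iff, Set.mem_singleton_iff]
          have : t < 1 := lt_of_le_of_lt ht.2 ha.2
          intro h; simp only [Pi.sub_apply] at h; rw [sub_eq_zero] at h; simp only [id_eq] at h; linarith
        · exact (continuous_const.mul ((continuous_id.sub continuous_const).pow 2)).continuousOn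
      · intro t ht
        rw [interior_Icc] at ht
        have htI : t ∈ Set.Ioo (0:ℝ) 1 := ⟨lt_of_lt_of_le hb.1 (le_of_lt ht.1), lt_trans ht.2 ha.2⟩
        exact ((hd t htI).differentiableAt).differentiableWithinAt
      · intro t ht
        rw [interior_Icc] at ht
        have htI : t ∈ Set.Ioo (0:ℝ) 1 := ⟨lt_of_lt_of_le hb.1 (le_of_lt ht.1), lt_trans ht.2 ha.2⟩
        rw [(hd t htI).deriv, hsign t htI]
        apply div_nonneg _ (le_of_lt (mul_pos htI.1 (by linarith [htI.2])))
        nlinarith [sq_nonneg (2*t-1), ht.2]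
    have h := hmono (Set.mem_Icc.mpr ⟨le_refl b, le_of_lt hba⟩)
      (Set.mem_Icc.mpr ⟨le_of_lt hba, le_refl a⟩) (le_of_lt hba)
    simp only [hφ] at h
    nlinarith [h]
  · rw [hba]; nlinarith
  · -- a < b : φ antitone on [a,b]
    have hanti : AntitoneOn φ (Set.Icc a b) := by
      apply antitoneOn_of_deriv_nonpos (convex_Icc a b)
      · apply ContinuousOn.add
        apply ContinuousOn.add
        · apply ContinuousOn.mul continuousOn_const
          apply ContinuousOn.comp Real.continuousOn_log continuous_id.continuousOn
          intro t ht
          simp only [Set.mem_compl_iff, Set.mem_singleton_iff, id]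
          have : 0 < t := lt_of_lt_of_le ha.1 ht.1
          exact ne_of_gt this
        · apply ContinuousOn.mul continuousOn_const
          apply ContinuousOn.comp Real.continuousOn_log
            (continuous_const.sub continuous_id).continuousOn
          intro t ht
          simp only [Set.mem_compl_iff, Set.mem_singleton_iff]
          have : t < 1 := lt_of_le_of_lt ht.2 hb.2
          intro h; simp only [Pi.sub_apply] at h; rw [sub_eq_zero] at h; simp only [id_eq] at h; linarith
        · exact (continuous_const.mul ((continuous_id.sub continuous_const).pow 2)).continuousOn
      · intro t ht
        rw [interior_Icc] at ht
        have htI : t ∈ Set.Ioo (0:ℝ) 1 := ⟨lt_of_lt_of_le ha.1 (le_of_lt ht.1), lt_trans ht.2 hb.2⟩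
        exact ((hd t htI).differentiableAt).differentiableWithinAt
      · intro t ht
        rw [interior_Icc] at ht
        have htI : t ∈ Set.Ioo (0:ℝ) 1 := ⟨lt_of_lt_of_le ha.1 (le_of_lt ht.1), lt_trans ht.2 hb.2⟩
        rw [(hd t htI).deriv, hsign t htI]
        apply div_nonpos_of_nonpos_of_nonneg _ (le_of_lt (mul_pos htI.1 (by linarith [htI.2])))
        nlinarith [sq_nonneg (2*t-1), ht.1]
    have h := hanti (Set.mem_Icc.mpr ⟨le_refl a, le_of_lt hba⟩)
      (Set.mem_Icc.mpr ⟨le_of_lt hba, le_refl b⟩) (le_of_lt hba)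
    simp only [hφ] at h
    nlinarith [h]

/-- Pinsker's inequality for Bernoulli distributions. -/
lemma pinsker (a b : ℝ) (ha : a ∈ Set.Icc (0:ℝ) 1) (hb : b ∈ Set.Ioo (0:ℝ) 1) :
    2 * (a - b)^2 ≤ relEnt a b := by
  rw [relEnt_eq a b ha hb.1 hb.2]
  rcases eq_or_lt_of_le ha.1 with h0 | h0
  · have := base0 b (Set.mem_Icc.mpr ⟨le_of_lt hb.1, le_of_lt hb.2⟩) hb.2
    simp only [← h0]
    norm_num
    nlinarith [this]
  rcases eq_or_lt_of_le ha.2 with h1 | h1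
  · have := base1 b (Set.mem_Icc.mpr ⟨le_of_lt hb.1, le_of_lt hb.2⟩) hb.1
    simp only [h1]
    norm_num
    nlinarith [this]
  · have := phi_max a b (Set.mem_Ioo.mpr ⟨h0, h1⟩) hb
    nlinarith [this]

lemma relEnt_nonneg (a b : ℝ) (ha : a ∈ Set.Icc (0:ℝ) 1) (hb : b ∈ Set.Ioo (0:ℝ) 1) :
    0 ≤ relEnt a b := le_trans (by positivity) (pinsker a b ha hb)

lemma relEnt_self (b : ℝ) (hb0 : b ≠ 0) (hb1 : b ≠ 1) : relEnt b b = 0 := by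
  have : (1:ℝ) - b ≠ 0 := fun h => hb1 (by linarith [sub_eq_zero.mp h])
  simp [relEnt, div_self hb0, div_self this]

lemma relEnt_le (a b η : ℝ) (ha : a ∈ Set.Icc (0:ℝ) 1) (hη : 0 < η)
    (hb : b ∈ Set.Icc η (1-η)) : relEnt a b ≤ 2 * Real.log (1/η) := by
  have hη1 : η ≤ 1/2 := by nlinarith [hb.1, hb.2]
  have hb0 : 0 < b := lt_of_lt_of_le hη hb.1
  have h1b : η ≤ 1 - b := by linarith [hb.2]
  have h1b0 : 0 < 1 - b := lt_of_lt_of_le hη h1b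
  have hlogpos : 0 ≤ Real.log (1/η) := by
    apply Real.log_nonneg
    rw [le_div_iff₀ hη]; linarith
  have t1 : a * Real.log (a/b) ≤ Real.log (1/η) := by
    rcases eq_or_lt_of_le ha.1 with h0 | h0
    · rw [← h0]
      simp only [zero_mul]
      exact hlogpos
    · have : Real.log (a/b) ≤ Real.log (1/η) := by
        apply Real.log_le_log (by positivity)
        apply div_le_div₀ (by linarith) ha.2 hη hb.1
      calc a * Real.log (a/b) ≤ a * Real.log (1/η) := by
            rcases le_or_gt (Real.log (a/b)) 0 with h | h
            · nlinarith [ha.1]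
            · exact mul_le_mul_of_nonneg_left this ha.1
        _ ≤ Real.log (1/η) := by nlinarith [ha.2]
  have t2 : (1-a) * Real.log ((1-a)/(1-b)) ≤ Real.log (1/η) := by
    have ha' : (1-a) ∈ Set.Icc (0:ℝ) 1 := Set.mem_Icc.mpr ⟨by linarith [ha.2], by linarith [ha.1]⟩
    rcases eq_or_lt_of_le ha'.1 with h0 | h0
    · have hlog : Real.log η ≤ 0 := Real.log_nonpos (le_of_lt hη) (by linarith)
      rw [← h0]
      simp only [zero_mul, one_div, Real.log_inv]
      linarith
    · have : Real.log ((1-a)/(1-b)) ≤ Real.log (1/η) := by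
        apply Real.log_le_log (by positivity)
        apply div_le_div₀ (by linarith) ha'.2 hη h1b
      calc (1-a) * Real.log ((1-a)/(1-b)) ≤ (1-a) * Real.log (1/η) := by
            rcases le_or_gt (Real.log ((1-a)/(1-b))) 0 with h | h
            · nlinarith [ha'.1]
            · exact mul_le_mul_of_nonneg_left this ha'.1
        _ ≤ Real.log (1/η) := by nlinarith [ha'.2]
  calc relEnt a b ≤ Real.log (1/η) + Real.log (1/η) := add_le_add t1 t2
    _ = 2 * Real.log (1/η) := by ring

/-- convexity of relEnt in the first variable -/
lemma relEnt_convexOn (b : ℝ) (hb : b ∈ Set.Ioo (0:ℝ) 1) :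
    ConvexOn ℝ (Set.Icc (0:ℝ) 1) (fun a => relEnt a b) := by
  have h1 : ConvexOn ℝ (Set.Icc (0:ℝ) 1) (fun a : ℝ => a * Real.log a) :=
    Real.convexOn_mul_log.subset (fun x hx => hx.1) (convex_Icc 0 1)
  have h2 : ConvexOn ℝ (Set.Icc (0:ℝ) 1) (fun a : ℝ => (1-a) * Real.log (1-a)) := by
    constructor
    · exact convex_Icc 0 1
    · intro x hx y hy s t hs ht hst
      have hx' : 1 - x ∈ Set.Ici (0:ℝ) := by simp; linarith [hx.2]
      have hy' : 1 - y ∈ Set.Ici (0:ℝ) := by simp; linarith [hy.2]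
      have := Real.convexOn_mul_log.2 hx' hy' hs ht hst
      simp only [smul_eq_mul] at this ⊢
      have e : 1 - (s * x + t * y) = s * (1-x) + t * (1-y) := by
        linear_combination -hst
      rw [e]
      exact this
  have h3 : ConvexOn ℝ (Set.Icc (0:ℝ) 1)
      (fun a : ℝ => -(a * Real.log b) - (1-a) * Real.log (1-b)) := by
    constructor
    · exact convex_Icc 0 1
    · intro x hx y hy s t hs ht hst
      simp only [smul_eq_mul]
      apply le_of_eq
      linear_combination (Real.log (1 - b)) * hst
  have hsum := (h1.add h2).add h3
  apply ConvexOn.congr hsum ?_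
  intro x hx
  simp only [Pi.add_apply]
  rw [relEnt_eq x b hx hb.1 hb.2]
  ring

lemma relEnt_interp (a b t : ℝ) (ha : a ∈ Set.Icc (0:ℝ) 1) (hb : b ∈ Set.Ioo (0:ℝ) 1)
    (ht : t ∈ Set.Icc (0:ℝ) 1) :
    relEnt ((1-t)*a + t*b) b ≤ (1-t) * relEnt a b := by
  have hcv := relEnt_convexOn b hb
  have hb' : b ∈ Set.Icc (0:ℝ) 1 := ⟨le_of_lt hb.1, le_of_lt hb.2⟩
  have := hcv.2 ha hb' (by linarith [ht.2] : (0:ℝ) ≤ 1 - t) ht.1 (by ring)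
  simp only [smul_eq_mul] at this
  rwa [relEnt_self b (ne_of_gt hb.1) (ne_of_lt hb.2), mul_zero, add_zero] at this

end RelEnt


section Qpart
open MeasureTheory


/-- the quadratic form -/
noncomputable def Qf (h : ℝ → ℝ → ℝ) (u : ℝ → ℝ) : ℝ :=
  ∫ x in UI, ∫ y in UI, u x * h x y * u y

/-- admissible test functions -/
def Adm (u : ℝ → ℝ) : Prop :=
  Measurable u ∧ IntegrableOn (fun x => u x ^ 2) UI ∧ (∫ x in UI, u x ^ 2) ≤ 1

/-- kernels bounded by c on UI² -/
def KerBdd (h : ℝ → ℝ → ℝ) (c : ℝ) : Prop :=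
  Measurable (Function.uncurry h) ∧ ∀ x ∈ UI, ∀ y ∈ UI, |h x y| ≤ c

lemma KerBdd.sect {h : ℝ → ℝ → ℝ} {c : ℝ} (hk : KerBdd h c) (x : ℝ) :
    Measurable (fun y => h x y) := hk.1.comp measurable_prodMk_left

lemma constIntUI (c : ℝ) : IntegrableOn (fun _ : ℝ => c) UI :=
  integrableOn_const (by rw [UI_vol]; exact ENNReal.one_ne_top)

lemma Adm.absInt {u : ℝ → ℝ} (hu : Adm u) : IntegrableOn (fun x => |u x|) UI := by
  refine Integrable.mono' ((hu.2.1.add (constIntUI 1)).div_const 2)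
    hu.1.abs.aestronglyMeasurable ?_
  refine Filter.Eventually.of_forall (fun x => ?_)
  simp only [Pi.add_apply, Real.norm_eq_abs, abs_abs]
  nlinarith [sq_nonneg (|u x| - 1), sq_abs (u x), abs_nonneg (u x)]

lemma Adm.int {u : ℝ → ℝ} (hu : Adm u) : IntegrableOn u UI :=
  hu.absInt.mono' hu.1.aestronglyMeasurable
    (Filter.Eventually.of_forall (fun x => by simp [Real.norm_eq_abs]))

lemma Adm.L1_nonneg {u : ℝ → ℝ} (hu : Adm u) : 0 ≤ ∫ x in UI, |u x| :=
  integral_nonneg (fun x => abs_nonneg _)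

lemma sqrt_int_sq_le_one {u : ℝ → ℝ} (hu : Adm u) :
    Real.sqrt (∫ x in UI, u x ^ 2) ≤ 1 := by
  calc Real.sqrt (∫ x in UI, u x ^ 2) ≤ Real.sqrt 1 := Real.sqrt_le_sqrt hu.2.2
    _ = 1 := Real.sqrt_one

lemma Adm.L1_le_one {u : ℝ → ℝ} (hu : Adm u) : (∫ x in UI, |u x|) ≤ 1 := by
  have h1 : (∫ x in UI, |u x * 1|) ≤ Real.sqrt (∫ x in UI, u x ^ 2) *
      Real.sqrt (∫ x in UI, (1:ℝ) ^ 2) := by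
    refine cs1 hu.1 measurable_const hu.2.1 ?_
    simp only [one_pow]
    exact constIntUI 1
  have h2 : (∫ x in UI, (1:ℝ) ^ 2) = 1 := by
    simp only [one_pow]; exact setIntegral_const_UI 1
  rw [h2, Real.sqrt_one, mul_one] at h1
  simp only [mul_one] at h1
  exact le_trans h1 (sqrt_int_sq_le_one hu)


lemma innerInt {h : ℝ → ℝ → ℝ} {c : ℝ} {u : ℝ → ℝ} (hk : KerBdd h c) (hu : Adm u)
    {x : ℝ} (hx : x ∈ UI) : IntegrableOn (fun y => u x * h x y * u y) UI := by
  refine Integrable.mono' (hu.absInt.const_mul (c * |u x|)) ?_ ?_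
  · exact ((measurable_const.mul (hk.sect x)).mul hu.1).aestronglyMeasurable
  · rw [ae_restrict_iff' UI_meas]
    refine Filter.Eventually.of_forall (fun y hy => ?_)
    have hb := hk.2 x hx y hy
    have hc : 0 ≤ c := le_trans (abs_nonneg _) hb
    simp only [Real.norm_eq_abs, abs_mul]
    calc |u x| * |h x y| * |u y| ≤ |u x| * c * |u y| := by
          apply mul_le_mul_of_nonneg_right _ (abs_nonneg _)
          exact mul_le_mul_of_nonneg_left hb (abs_nonneg _)
      _ = c * |u x| * |u y| := by ring
      _ ≤ _ := le_refl _

lemma abs_int_le (f : ℝ → ℝ) : |∫ x in UI, f x| ≤ ∫ x in UI, |f x| := by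
  simpa [Real.norm_eq_abs] using MeasureTheory.norm_integral_le_integral_norm
    (μ := volume.restrict UI) f

lemma innerBound {h : ℝ → ℝ → ℝ} {c : ℝ} {u : ℝ → ℝ} (hk : KerBdd h c) (hu : Adm u)
    {x : ℝ} (hx : x ∈ UI) :
    |∫ y in UI, u x * h x y * u y| ≤ c * |u x| * (∫ y in UI, |u y|) := by
  calc |∫ y in UI, u x * h x y * u y| ≤ ∫ y in UI, |u x * h x y * u y| :=
        abs_int_le _
    _ ≤ ∫ y in UI, c * |u x| * |u y| := by
        refine setIntegral_mono_on ((innerInt hk hu hx).abs) (hu.absInt.const_mul _) UI_meas ?_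
        intro y hy
        have hb := hk.2 x hx y hy
        simp only [abs_mul]
        calc |u x| * |h x y| * |u y| ≤ |u x| * c * |u y| := by
              apply mul_le_mul_of_nonneg_right _ (abs_nonneg _)
              exact mul_le_mul_of_nonneg_left hb (abs_nonneg _)
          _ = c * |u x| * |u y| := by ring
    _ = c * |u x| * (∫ y in UI, |u y|) := MeasureTheory.integral_const_mul _ _

lemma outerMeas {h : ℝ → ℝ → ℝ} {c : ℝ} {u : ℝ → ℝ} (hk : KerBdd h c) (hu : Adm u) :
    StronglyMeasurable (fun x => ∫ y in UI, u x * h x y * u y) := by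
  have hF : Measurable (fun p : ℝ × ℝ => u p.1 * h p.1 p.2 * u p.2) :=
    ((hu.1.comp measurable_fst).mul hk.1).mul (hu.1.comp measurable_snd)
  exact hF.stronglyMeasurable.integral_prod_right'

lemma outerInt {h : ℝ → ℝ → ℝ} {c : ℝ} {u : ℝ → ℝ} (hk : KerBdd h c) (hu : Adm u) :
    IntegrableOn (fun x => ∫ y in UI, u x * h x y * u y) UI := by
  refine Integrable.mono' ((hu.absInt.const_mul (c * (∫ y in UI, |u y|))))
    (outerMeas hk hu).aestronglyMeasurable ?_
  rw [ae_restrict_iff' UI_meas]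
  refine Filter.Eventually.of_forall (fun x hx => ?_)
  rw [Real.norm_eq_abs]
  calc |∫ y in UI, u x * h x y * u y| ≤ c * |u x| * (∫ y in UI, |u y|) := innerBound hk hu hx
    _ = c * (∫ y in UI, |u y|) * |u x| := by ring

lemma Qabs {h : ℝ → ℝ → ℝ} {c : ℝ} {u : ℝ → ℝ} (hk : KerBdd h c) (hu : Adm u) :
    |Qf h u| ≤ c := by
  have hc : 0 ≤ c := le_trans (abs_nonneg _) (hk.2 0 (by simp [UI]) 0 (by simp [UI]))
  have hL1 := hu.L1_le_one
  have hL0 := hu.L1_nonneg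
  calc |Qf h u| ≤ ∫ x in UI, |∫ y in UI, u x * h x y * u y| := abs_int_le _
    _ ≤ ∫ x in UI, c * (∫ y in UI, |u y|) * |u x| := by
        refine setIntegral_mono_on ((outerInt hk hu).abs) (hu.absInt.const_mul _) UI_meas ?_
        intro x hx
        calc |∫ y in UI, u x * h x y * u y| ≤ c * |u x| * (∫ y in UI, |u y|) :=
              innerBound hk hu hx
          _ = c * (∫ y in UI, |u y|) * |u x| := by ring
    _ = c * (∫ y in UI, |u y|) * (∫ x in UI, |u x|) := MeasureTheory.integral_const_mul _ _
    _ ≤ c * 1 * 1 := by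
        apply mul_le_mul _ hL1 hL0 (by positivity)
        apply mul_le_mul_of_nonneg_left hL1 hc
    _ = c := by ring

lemma Qsub {h k : ℝ → ℝ → ℝ} {c d : ℝ} {u : ℝ → ℝ} (hh : KerBdd h c) (hk : KerBdd k d)
    (hu : Adm u) :
    Qf h u - Qf k u = Qf (fun x y => h x y - k x y) u := by
  rw [Qf, Qf, Qf, ← integral_sub (outerInt hh hu) (outerInt hk hu)]
  apply setIntegral_congr_fun UI_meas
  intro x hx
  simp only
  rw [← integral_sub (innerInt hh hu hx) (innerInt hk hu hx)]
  apply setIntegral_congr_fun UI_meas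
  intro y hy
  simp only
  ring

lemma QL2 {d : ℝ → ℝ → ℝ} {c : ℝ} {u : ℝ → ℝ} (hd : KerBdd d c) (hu : Adm u) :
    |Qf d u| ≤ Real.sqrt (∫ x in UI, ∫ y in UI, d x y ^ 2) := by
  have hc : 0 ≤ c := le_trans (abs_nonneg _) (hd.2 0 (by simp [UI]) 0 (by simp [UI]))
  set D : ℝ → ℝ := fun x => ∫ y in UI, d x y ^ 2 with hD
  have hDmeas : StronglyMeasurable D := by
    have : Measurable (fun p : ℝ × ℝ => d p.1 p.2 ^ 2) := hd.1.pow_const 2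
    exact this.stronglyMeasurable.integral_prod_right'
  have hDnonneg : ∀ x, 0 ≤ D x := fun x => integral_nonneg (fun y => sq_nonneg _)
  have hDker : ∀ x ∈ UI, IntegrableOn (fun y => d x y ^ 2) UI := by
    intro x hx
    apply bddIntegrableOn ((hd.sect x).pow_const 2)
    intro y hy
    rw [abs_of_nonneg (sq_nonneg _)]
    calc d x y ^ 2 = |d x y| ^ 2 := (sq_abs _).symm
      _ ≤ c ^ 2 := by nlinarith [hd.2 x hx y hy, abs_nonneg (d x y)]
  have hDbd : ∀ x ∈ UI, D x ≤ c ^ 2 := by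
    intro x hx
    calc D x ≤ ∫ _ in UI, c ^ 2 :=
          setIntegral_mono_on (hDker x hx) (constIntUI _) UI_meas (fun y hy => by
            rw [← sq_abs (d x y)]
            nlinarith [hd.2 x hx y hy, abs_nonneg (d x y)])
      _ = c ^ 2 := setIntegral_const_UI _
  have hDint : IntegrableOn D UI := by
    apply bddIntegrableOn hDmeas.measurable
    intro x hx
    rw [abs_of_nonneg (hDnonneg x)]
    exact hDbd x hx
  -- inner bound
  have hinner : ∀ x ∈ UI, |∫ y in UI, u x * d x y * u y| ≤ |u x| * Real.sqrt (D x) := by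
    intro x hx
    have e1 : (∫ y in UI, u x * d x y * u y) = u x * ∫ y in UI, d x y * u y := by
      rw [← MeasureTheory.integral_const_mul]
      apply setIntegral_congr_fun UI_meas
      intro y hy; simp only; ring
    rw [e1, abs_mul]
    apply mul_le_mul_of_nonneg_left _ (abs_nonneg _)
    calc |∫ y in UI, d x y * u y| ≤ ∫ y in UI, |d x y * u y| := abs_int_le _
      _ ≤ Real.sqrt (∫ y in UI, d x y ^ 2) * Real.sqrt (∫ y in UI, u y ^ 2) :=
          cs1 (hd.sect x) hu.1 (hDker x hx) hu.2.1
      _ ≤ Real.sqrt (D x) * 1 := by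
          apply mul_le_mul_of_nonneg_left (sqrt_int_sq_le_one hu) (Real.sqrt_nonneg _)
      _ = Real.sqrt (D x) := mul_one _
  -- outer
  have hsq : IntegrableOn (fun x => Real.sqrt (D x) ^ 2) UI := by
    apply IntegrableOn.congr_fun hDint _ UI_meas
    intro x _
    exact (Real.sq_sqrt (hDnonneg x)).symm
  calc |Qf d u| ≤ ∫ x in UI, |∫ y in UI, u x * d x y * u y| := abs_int_le _
    _ ≤ ∫ x in UI, |u x * Real.sqrt (D x)| := by
        refine setIntegral_mono_on ((outerInt hd hu).abs) ?_ UI_meas ?_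
        · refine Integrable.mono' (hu.absInt.const_mul c)
            ((hu.1.mul hDmeas.measurable.sqrt).abs).aestronglyMeasurable ?_
          rw [ae_restrict_iff' UI_meas]
          refine Filter.Eventually.of_forall (fun x hx => ?_)
          rw [Real.norm_eq_abs, abs_abs, abs_mul, abs_of_nonneg (Real.sqrt_nonneg _)]
          have h1 : Real.sqrt (D x) ≤ c := by
            rw [show c = Real.sqrt (c^2) from (Real.sqrt_sq hc).symm]
            exact Real.sqrt_le_sqrt (hDbd x hx)
          calc |u x| * Real.sqrt (D x) ≤ |u x| * c :=
                mul_le_mul_of_nonneg_left h1 (abs_nonneg _)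
            _ = c * |u x| := mul_comm _ _
        · intro x hx
          rw [abs_mul] at *
          calc |∫ y in UI, u x * d x y * u y| ≤ |u x| * Real.sqrt (D x) := hinner x hx
            _ = |u x| * |Real.sqrt (D x)| := by rw [abs_of_nonneg (Real.sqrt_nonneg _)]
    _ ≤ Real.sqrt (∫ x in UI, u x ^ 2) * Real.sqrt (∫ x in UI, Real.sqrt (D x) ^ 2) :=
        cs1 hu.1 hDmeas.measurable.sqrt hu.2.1 hsq
    _ ≤ 1 * Real.sqrt (∫ x in UI, D x) := by
        apply mul_le_mul (sqrt_int_sq_le_one hu) _ (Real.sqrt_nonneg _) (by norm_num)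
        apply Real.sqrt_le_sqrt
        apply le_of_eq
        apply setIntegral_congr_fun UI_meas
        intro x _
        exact Real.sq_sqrt (hDnonneg x)
    _ = Real.sqrt (∫ x in UI, ∫ y in UI, d x y ^ 2) := by rw [one_mul]

def Sset (h : ℝ → ℝ → ℝ) : Set ℝ :=
  {t : ℝ | ∃ u : ℝ → ℝ, Measurable u ∧ IntegrableOn (fun x => u x ^ 2) UI ∧
    (∫ x in UI, u x ^ 2) ≤ 1 ∧ t = |∫ x in UI, ∫ y in UI, u x * h x y * u y|}

lemma gOpNorm_eq (h : ℝ → ℝ → ℝ) : gOpNorm h = sSup (Sset h) := rfl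

lemma zero_mem_Sset (h : ℝ → ℝ → ℝ) : (0:ℝ) ∈ Sset h := by
  refine ⟨fun _ => 0, measurable_const, by simpa using constIntUI 0, by simp, by simp⟩

lemma mem_Sset {h : ℝ → ℝ → ℝ} {u : ℝ → ℝ} (hu : Adm u) : |Qf h u| ∈ Sset h :=
  ⟨u, hu.1, hu.2.1, hu.2.2, rfl⟩

lemma bddAbove_Sset {h : ℝ → ℝ → ℝ} {c : ℝ} (hk : KerBdd h c) : BddAbove (Sset h) := by
  refine ⟨c, fun t ht => ?_⟩
  obtain ⟨u, h1, h2, h3, h4⟩ := ht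
  rw [h4]
  exact Qabs hk ⟨h1, h2, h3⟩

lemma gOpNorm_nonneg' (h : ℝ → ℝ → ℝ) {c : ℝ} (hk : KerBdd h c) : 0 ≤ gOpNorm h :=
  le_csSup (bddAbove_Sset hk) (zero_mem_Sset h)

lemma abs_Qf_le_gOpNorm {h : ℝ → ℝ → ℝ} {c : ℝ} (hk : KerBdd h c) {u : ℝ → ℝ} (hu : Adm u) :
    |Qf h u| ≤ gOpNorm h :=
  le_csSup (bddAbove_Sset hk) (mem_Sset hu)

lemma gOpNorm_le {h : ℝ → ℝ → ℝ} {M : ℝ} (hle : ∀ u : ℝ → ℝ, Adm u → |Qf h u| ≤ M) :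
    gOpNorm h ≤ M := by
  apply csSup_le ⟨0, zero_mem_Sset h⟩
  rintro t ⟨u, h1, h2, h3, h4⟩
  rw [h4]
  exact hle u ⟨h1, h2, h3⟩

lemma gOpNorm_le_one {h : ℝ → ℝ → ℝ} (hk : KerBdd h 1) : gOpNorm h ≤ 1 :=
  gOpNorm_le (fun u hu => Qabs hk hu)

/-- Lipschitz-type bound for gOpNorm with sup-difference δ -/
lemma gOpNorm_le_add {h k : ℝ → ℝ → ℝ} {c d δ : ℝ} (hh : KerBdd h c) (hk : KerBdd k d)
    (hδ : ∀ x ∈ UI, ∀ y ∈ UI, |h x y - k x y| ≤ δ) :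
    gOpNorm h ≤ gOpNorm k + δ := by
  have hdk : KerBdd (fun x y => h x y - k x y) δ :=
    ⟨(hh.1.sub hk.1), hδ⟩
  apply gOpNorm_le
  intro u hu
  have := Qsub hh hk hu
  calc |Qf h u| = |Qf k u + (Qf h u - Qf k u)| := by ring_nf
    _ ≤ |Qf k u| + |Qf h u - Qf k u| := abs_add_le _ _
    _ ≤ gOpNorm k + δ := by
        apply add_le_add (abs_Qf_le_gOpNorm hk hu)
        rw [this]
        exact Qabs hdk hu

/-- L²-type bound for gOpNorm difference -/
lemma gOpNorm_le_add_L2 {h k : ℝ → ℝ → ℝ} {c d : ℝ} (hh : KerBdd h c) (hk : KerBdd k d) :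
    gOpNorm h ≤ gOpNorm k + Real.sqrt (∫ x in UI, ∫ y in UI, (h x y - k x y) ^ 2) := by
  have hdk : KerBdd (fun x y => h x y - k x y) (c + d) := by
    refine ⟨(hh.1.sub hk.1), fun x hx y hy => ?_⟩
    calc |h x y - k x y| ≤ |h x y| + |k x y| := abs_sub _ _
      _ ≤ c + d := add_le_add (hh.2 x hx y hy) (hk.2 x hx y hy)
  apply gOpNorm_le
  intro u hu
  calc |Qf h u| = |Qf k u + (Qf h u - Qf k u)| := by ring_nf
    _ ≤ |Qf k u| + |Qf h u - Qf k u| := abs_add_le _ _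
    _ ≤ gOpNorm k + Real.sqrt (∫ x in UI, ∫ y in UI, (h x y - k x y) ^ 2) := by
        apply add_le_add (abs_Qf_le_gOpNorm hk hu)
        rw [Qsub hh hk hu]
        exact QL2 hdk hu

/-- the operator norm of the constant kernel β -/
lemma gOpNorm_const {β : ℝ} (hβ : β ∈ Set.Icc (0:ℝ) 1) :
    gOpNorm (fun _ _ => β) = β := by
  have hker : KerBdd (fun _ _ : ℝ => β) 1 := by
    refine ⟨measurable_const, fun x _ y _ => ?_⟩
    rw [abs_of_nonneg hβ.1]; exact hβ.2
  apply le_antisymm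
  · apply gOpNorm_le
    intro u hu
    have e1 : Qf (fun _ _ => β) u = β * (∫ x in UI, u x) ^ 2 := by
      rw [Qf]
      have e2 : ∀ x : ℝ, (∫ y in UI, u x * β * u y) = u x * β * ∫ y in UI, u y :=
        fun x => MeasureTheory.integral_const_mul _ _
      rw [setIntegral_congr_fun UI_meas (fun x _ => e2 x)]
      rw [show (fun x => u x * β * ∫ y in UI, u y) = fun x => u x * (β * ∫ y in UI, u y) by
        funext x; ring]
      rw [MeasureTheory.integral_mul_const]
      ring
    rw [e1, abs_mul, abs_of_nonneg hβ.1]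
    have h2 : |∫ x in UI, u x| ≤ 1 := by
      calc |∫ x in UI, u x| ≤ ∫ x in UI, |u x| := abs_int_le _
        _ ≤ 1 := hu.L1_le_one
    have h3 : |(∫ x in UI, u x) ^ 2| ≤ 1 := by
      rw [abs_pow]
      calc |∫ x in UI, u x| ^ 2 ≤ 1 ^ 2 := by
            apply pow_le_pow_left₀ (abs_nonneg _) h2
        _ = 1 := one_pow 2
    nlinarith [hβ.1, abs_nonneg ((∫ x in UI, u x) ^ 2), hβ.2]
  · apply le_csSup (bddAbove_Sset hker)
    refine ⟨fun x => UI.indicator (fun _ => 1) x, measurable_const.indicator UI_meas, ?_, ?_, ?_⟩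
    · apply bddIntegrableOn ((measurable_const.indicator UI_meas).pow_const 2) (M := 1)
      intro x _
      rw [abs_of_nonneg (sq_nonneg _)]
      by_cases hx : x ∈ UI <;> simp [Set.indicator_apply, hx]
    · apply le_of_eq
      rw [setIntegral_congr_fun UI_meas (g := fun _ => (1:ℝ))
        (fun x hx => by simp [Set.indicator_apply, hx])]
      exact setIntegral_const_UI 1
    · have e : ∀ x ∈ UI, (∫ y in UI, UI.indicator (fun _ => (1:ℝ)) x * β *
          UI.indicator (fun _ => (1:ℝ)) y) = β := by
        intro x hx
        rw [setIntegral_congr_fun UI_meas (g := fun _ => β)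
          (fun y hy => by simp [Set.indicator_apply, hx, hy])]
        exact setIntegral_const_UI β
      rw [setIntegral_congr_fun UI_meas e, setIntegral_const_UI β,
        abs_of_nonneg hβ.1]

end Qpart

section Main
open MeasureTheory

/-- the constraint set of psiRate -/
def psiSet (r : ℝ → ℝ → ℝ) (β : ℝ) : Set ℝ :=
  {c : ℝ | ∃ h : ℝ → ℝ → ℝ, IsGraphon h ∧ gOpNorm h = β ∧ Ient r h = c}

lemma psiRate_eq (r : ℝ → ℝ → ℝ) (β : ℝ) : psiRate r β = sInf (psiSet r β) := rfl

lemma relEnt_ker_meas {r h : ℝ → ℝ → ℝ} (h1 : Measurable (Function.uncurry r))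
    (h2 : Measurable (Function.uncurry h)) :
    Measurable (Function.uncurry (fun x y => relEnt (h x y) (r x y))) := by
  have e : Function.uncurry (fun x y => relEnt (h x y) (r x y)) =
      fun p : ℝ × ℝ => (Function.uncurry h p) * Real.log
          (Function.uncurry h p / Function.uncurry r p)
        + (1 - Function.uncurry h p) * Real.log
          ((1 - Function.uncurry h p) / (1 - Function.uncurry r p)) := rfl
  rw [e]
  exact (h2.mul ((h2.div h1).log)).add ((measurable_const.sub h2).mul
    (((measurable_const.sub h2).div (measurable_const.sub h1)).log))

lemma dblInner_int {F : ℝ → ℝ → ℝ} {MF : ℝ} (hF : KerBdd F MF) {x : ℝ} (hx : x ∈ UI) :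
    IntegrableOn (fun y => F x y) UI :=
  bddIntegrableOn (hF.sect x) (fun y hy => hF.2 x hx y hy)

lemma dblInner_bound {F : ℝ → ℝ → ℝ} {MF : ℝ} (hF : KerBdd F MF) {x : ℝ} (hx : x ∈ UI) :
    |∫ y in UI, F x y| ≤ MF := by
  calc |∫ y in UI, F x y| ≤ ∫ y in UI, |F x y| := abs_int_le _
    _ ≤ ∫ _ in UI, MF := setIntegral_mono_on ((dblInner_int hF hx).abs) (constIntUI _)
        UI_meas (fun y hy => hF.2 x hx y hy)
    _ = MF := setIntegral_const_UI _

lemma dblOuter_meas {F : ℝ → ℝ → ℝ} {MF : ℝ} (hF : KerBdd F MF) :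
    Measurable (fun x => ∫ y in UI, F x y) :=
  (hF.1.stronglyMeasurable.integral_prod_right').measurable

lemma dblOuter_int {F : ℝ → ℝ → ℝ} {MF : ℝ} (hF : KerBdd F MF) :
    IntegrableOn (fun x => ∫ y in UI, F x y) UI :=
  bddIntegrableOn (dblOuter_meas hF) (fun x hx => dblInner_bound hF hx)

lemma dblInt_mono {F G : ℝ → ℝ → ℝ} {MF MG : ℝ} (hF : KerBdd F MF) (hG : KerBdd G MG)
    (hle : ∀ x ∈ UI, ∀ y ∈ UI, F x y ≤ G x y) :
    (∫ x in UI, ∫ y in UI, F x y) ≤ ∫ x in UI, ∫ y in UI, G x y := by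
  refine setIntegral_mono_on (dblOuter_int hF) (dblOuter_int hG) UI_meas ?_
  intro x hx
  exact setIntegral_mono_on (dblInner_int hF hx) (dblInner_int hG hx) UI_meas
    (fun y hy => hle x hx y hy)

lemma dblInt_nonneg {F : ℝ → ℝ → ℝ} (h0 : ∀ x ∈ UI, ∀ y ∈ UI, 0 ≤ F x y) :
    0 ≤ ∫ x in UI, ∫ y in UI, F x y :=
  setIntegral_nonneg UI_meas (fun x hx => setIntegral_nonneg UI_meas (fun y hy => h0 x hx y hy))

lemma dblInt_smul (c : ℝ) (F : ℝ → ℝ → ℝ) :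
    (∫ x in UI, ∫ y in UI, c * F x y) = c * ∫ x in UI, ∫ y in UI, F x y := by
  simp_rw [MeasureTheory.integral_const_mul]

variable {r : ℝ → ℝ → ℝ} {η : ℝ}

/-- standing hypotheses on the reference graphon -/
structure RefHyp (r : ℝ → ℝ → ℝ) (η : ℝ) : Prop where
  hη : 0 < η
  hmeas : Measurable (Function.uncurry r)
  hsymm : ∀ x y, r x y = r y x
  hbound : ∀ x ∈ UI, ∀ y ∈ UI, r x y ∈ Set.Icc η (1 - η)

namespace RefHyp

lemma η_le (H : RefHyp r η) : η ≤ 1/2 := by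
  have h := H.hbound 0 (by simp [UI]) 0 (by simp [UI])
  have := h.1; have := h.2; linarith

lemma mem_Ioo (H : RefHyp r η) {x y : ℝ} (hx : x ∈ UI) (hy : y ∈ UI) :
    r x y ∈ Set.Ioo (0:ℝ) 1 := by
  have h := H.hbound x hx y hy
  exact ⟨lt_of_lt_of_le H.hη h.1, lt_of_le_of_lt h.2 (by linarith [H.hη])⟩

lemma ker (H : RefHyp r η) : KerBdd r 1 := by
  refine ⟨H.hmeas, fun x hx y hy => ?_⟩
  have h := H.mem_Ioo hx hy
  rw [abs_of_nonneg (le_of_lt h.1)]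
  exact le_of_lt h.2

end RefHyp

lemma IsGraphon.ker {h : ℝ → ℝ → ℝ} (hG : IsGraphon h) : KerBdd h 1 := by
  refine ⟨hG.1, fun x hx y hy => ?_⟩
  have hb := hG.2.2 x hx y hy
  rw [abs_of_nonneg hb.1]
  exact hb.2

/-- the relEnt kernel is bounded by Mη := 2 log (1/η) -/
lemma relEnt_kerBdd (H : RefHyp r η) {h : ℝ → ℝ → ℝ} (hG : IsGraphon h) :
    KerBdd (fun x y => relEnt (h x y) (r x y)) (2 * Real.log (1/η)) := by
  refine ⟨relEnt_ker_meas H.hmeas hG.1, fun x hx y hy => ?_⟩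
  have h1 := relEnt_nonneg (h x y) (r x y) (hG.2.2 x hx y hy) (H.mem_Ioo hx hy)
  rw [abs_of_nonneg h1]
  exact relEnt_le _ _ η (hG.2.2 x hx y hy) H.hη (H.hbound x hx y hy)

lemma Ient_nonneg (H : RefHyp r η) {h : ℝ → ℝ → ℝ} (hG : IsGraphon h) :
    0 ≤ Ient r h :=
  dblInt_nonneg (fun x hx y hy =>
    relEnt_nonneg (h x y) (r x y) (hG.2.2 x hx y hy) (H.mem_Ioo hx hy))

lemma psiSet_bddBelow (H : RefHyp r η) (β : ℝ) : BddBelow (psiSet r β) := by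
  refine ⟨0, fun c hc => ?_⟩
  obtain ⟨h, hG, _, he⟩ := hc
  exact he ▸ Ient_nonneg H hG

lemma const_graphon {β : ℝ} (hβ : β ∈ Set.Icc (0:ℝ) 1) : IsGraphon (fun _ _ => β) :=
  ⟨measurable_const, fun _ _ => rfl, fun x _ y _ => hβ⟩

lemma psiSet_nonempty (H : RefHyp r η) {β : ℝ} (hβ : β ∈ Set.Icc (0:ℝ) 1) :
    (psiSet r β).Nonempty :=
  ⟨Ient r (fun _ _ => β), ⟨fun _ _ => β, const_graphon hβ, gOpNorm_const hβ, rfl⟩⟩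

/-- lower bound : every element of psiSet r β is at least 2 (C_r - β)². -/
lemma psiSet_lower (H : RefHyp r η) {β : ℝ} {c : ℝ} (hc : c ∈ psiSet r β) :
    2 * (gOpNorm r - β)^2 ≤ c := by
  obtain ⟨h, hG, hn, he⟩ := hc
  set E := ∫ x in UI, ∫ y in UI, (h x y - r x y) ^ 2 with hE
  have hkerh := hG.ker
  have hkerr := H.ker
  have hE0 : 0 ≤ E := dblInt_nonneg (fun x _ y _ => sq_nonneg _)
  -- Pinsker : c ≥ 2 E
  have hsqker : KerBdd (fun x y => 2 * (h x y - r x y)^2) 8 := by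
    refine ⟨((((hG.1.sub H.hmeas)).pow_const 2).const_mul 2 : ), fun x hx y hy => ?_⟩
    have h1 : |h x y - r x y| ≤ 2 := by
      calc |h x y - r x y| ≤ |h x y| + |r x y| := abs_sub _ _
        _ ≤ 1 + 1 := add_le_add (hkerh.2 x hx y hy) (hkerr.2 x hx y hy)
        _ = 2 := by norm_num
    rw [abs_of_nonneg (by positivity)]
    show (2:ℝ) * (h x y - r x y)^2 ≤ 8
    nlinarith [sq_abs (h x y - r x y), abs_nonneg (h x y - r x y)]
  have hPin : 2 * E ≤ c := by
    rw [← he, ← dblInt_smul 2 (fun x y => (h x y - r x y)^2)]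
    refine dblInt_mono hsqker (relEnt_kerBdd H hG) ?_
    intro x hx y hy
    have := pinsker (h x y) (r x y) (hG.2.2 x hx y hy) (H.mem_Ioo hx hy)
    nlinarith [this]
  -- |C - β| ≤ sqrt E
  have h1 : gOpNorm h ≤ gOpNorm r + Real.sqrt E := gOpNorm_le_add_L2 hkerh hkerr
  have h2 : gOpNorm r ≤ gOpNorm h + Real.sqrt E := by
    have := gOpNorm_le_add_L2 hkerr hkerh
    have e : (∫ x in UI, ∫ y in UI, (r x y - h x y) ^ 2) = E := by
      rw [hE]
      congr 1
      funext x
      congr 1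
      funext y
      ring
    rwa [e] at this
  have h3 : (gOpNorm r - β)^2 ≤ E := by
    rw [← hn]
    have habs : |gOpNorm r - gOpNorm h| ≤ Real.sqrt E := abs_sub_le_iff.mpr ⟨by linarith, by linarith⟩
    calc (gOpNorm r - gOpNorm h)^2 = |gOpNorm r - gOpNorm h|^2 := (sq_abs _).symm
      _ ≤ Real.sqrt E ^ 2 := by
          apply pow_le_pow_left₀ (abs_nonneg _) habs
      _ = E := Real.sq_sqrt hE0
  linarith

lemma psi_lower (H : RefHyp r η) {β : ℝ} (hβ : β ∈ Set.Icc (0:ℝ) 1) :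
    2 * (gOpNorm r - β)^2 ≤ psiRate r β := by
  rw [psiRate_eq]
  exact le_csInf (psiSet_nonempty H hβ) (fun c hc => psiSet_lower H hc)

end Main

section Main2
open MeasureTheory

variable {r : ℝ → ℝ → ℝ} {η : ℝ}

/-- interpolation kernel -/
def interpK (h r : ℝ → ℝ → ℝ) (t : ℝ) : ℝ → ℝ → ℝ :=
  fun x y => (1 - t) * h x y + t * r x y

lemma interpK_graphon (H : RefHyp r η) {h : ℝ → ℝ → ℝ} (hG : IsGraphon h)
    {t : ℝ} (ht : t ∈ Set.Icc (0:ℝ) 1) : IsGraphon (interpK h r t) := by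
  refine ⟨?_, ?_, ?_⟩
  · have : Function.uncurry (interpK h r t) = fun p : ℝ × ℝ =>
        (1 - t) * Function.uncurry h p + t * Function.uncurry r p := rfl
    rw [this]
    exact (measurable_const.mul hG.1).add (measurable_const.mul H.hmeas)
  · intro x y
    simp only [interpK, hG.2.1 x y, H.hsymm x y]
  · intro x hx y hy
    have h1 := hG.2.2 x hx y hy
    have h2 := H.hbound x hx y hy
    have h2' : r x y ∈ Set.Icc (0:ℝ) 1 :=
      ⟨le_trans (le_of_lt H.hη) h2.1, le_trans h2.2 (by linarith [H.hη])⟩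
    simp only [interpK, Set.mem_Icc]
    constructor
    · have := ht.1; have := ht.2
      nlinarith [h1.1, h2'.1]
    · nlinarith [h1.2, h2'.2, ht.1, ht.2]

lemma interpK_ker (H : RefHyp r η) {h : ℝ → ℝ → ℝ} (hG : IsGraphon h)
    {t : ℝ} (ht : t ∈ Set.Icc (0:ℝ) 1) : KerBdd (interpK h r t) 1 :=
  (interpK_graphon H hG ht).ker

lemma interpK_lip (H : RefHyp r η) {h : ℝ → ℝ → ℝ} (hG : IsGraphon h)
    {t s : ℝ} (ht : t ∈ Set.Icc (0:ℝ) 1) (hs : s ∈ Set.Icc (0:ℝ) 1) :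
    gOpNorm (interpK h r t) ≤ gOpNorm (interpK h r s) + |t - s| := by
  refine gOpNorm_le_add (interpK_ker H hG ht) (interpK_ker H hG hs) ?_
  intro x hx y hy
  have h1 := hG.2.2 x hx y hy
  have h2 := H.hbound x hx y hy
  have h2' : r x y ∈ Set.Icc (0:ℝ) 1 :=
    ⟨le_trans (le_of_lt H.hη) h2.1, le_trans h2.2 (by linarith [H.hη])⟩
  have e : interpK h r t x y - interpK h r s x y = (t - s) * (r x y - h x y) := by
    simp only [interpK]; ring
  rw [e, abs_mul]
  have h3 : |r x y - h x y| ≤ 1 := by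
    rw [abs_le]
    constructor <;> [linarith [h2'.1, h1.2]; linarith [h2'.2, h1.1]]
  calc |t - s| * |r x y - h x y| ≤ |t - s| * 1 :=
        mul_le_mul_of_nonneg_left h3 (abs_nonneg _)
    _ = |t - s| := mul_one _

lemma interpK_zero (h r : ℝ → ℝ → ℝ) : interpK h r 0 = h := by
  funext x y; simp [interpK]

lemma interpK_one (h r : ℝ → ℝ → ℝ) : interpK h r 1 = r := by
  funext x y; simp [interpK]

/-- key interpolation estimate -/
lemma psi_le_interp (H : RefHyp r η) {a b : ℝ} (ha : a ∈ Set.Icc (0:ℝ) 1)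
    (hbetween : b ∈ Set.Icc (min a (gOpNorm r)) (max a (gOpNorm r))) :
    psiRate r b ≤ (1 - |b - a|) * psiRate r a := by
  have hC0 : 0 ≤ gOpNorm r := gOpNorm_nonneg' r H.ker
  have hC1 : gOpNorm r ≤ 1 := gOpNorm_le_one H.ker
  have hb : b ∈ Set.Icc (0:ℝ) 1 := by
    constructor
    · exact le_trans (le_min ha.1 hC0) hbetween.1
    · exact le_trans hbetween.2 (max_le ha.2 hC1)
  have hba1 : |b - a| ≤ 1 := by
    rw [abs_le]
    constructor <;> [linarith [hb.1, ha.2]; linarith [hb.2, ha.1]]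
  -- step 1 : ∀ c ∈ psiSet r a, psiRate r b ≤ (1 - |b-a|) * c
  have step : ∀ c ∈ psiSet r a, psiRate r b ≤ (1 - |b - a|) * c := by
    rintro c ⟨h, hG, hn, he⟩
    set g : ℝ → ℝ := fun t => gOpNorm (interpK h r t) with hg
    have hg0 : g 0 = a := by rw [hg]; simp only [interpK_zero]; exact hn
    have hg1 : g 1 = gOpNorm r := by rw [hg]; simp only [interpK_one]
    have hlip : ∀ t ∈ Set.Icc (0:ℝ) 1, ∀ s ∈ Set.Icc (0:ℝ) 1, dist (g t) (g s) ≤ 1 * dist t s := by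
      intro t ht s hs
      rw [Real.dist_eq, Real.dist_eq, one_mul, abs_le]
      constructor
      · have := interpK_lip H hG hs ht
        rw [abs_sub_comm]
        linarith
      · have := interpK_lip H hG ht hs
        linarith
    have hcont : ContinuousOn g (Set.Icc (0:ℝ) 1) := by
      have : LipschitzOnWith 1 g (Set.Icc (0:ℝ) 1) := by
        rw [lipschitzOnWith_iff_dist_le_mul]
        intro t ht s hs
        simpa using hlip t ht s hs
      exact this.continuousOn
    -- IVT
    have hexists : ∃ t ∈ Set.Icc (0:ℝ) 1, g t = b := by
      rcases le_or_gt a (gOpNorm r) with hle | hlt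
      · have hmem : b ∈ Set.Icc (g 0) (g 1) := by
          rw [hg0, hg1]
          rwa [min_eq_left hle, max_eq_right hle] at hbetween
        have := intermediate_value_Icc (by norm_num : (0:ℝ) ≤ 1) hcont hmem
        obtain ⟨t, ht, hgt⟩ := this
        exact ⟨t, ht, hgt⟩
      · have hmem : b ∈ Set.Icc (g 1) (g 0) := by
          rw [hg0, hg1]
          rwa [min_eq_right (le_of_lt hlt), max_eq_left (le_of_lt hlt)] at hbetween
        have := intermediate_value_Icc' (by norm_num : (0:ℝ) ≤ 1) hcont hmem
        obtain ⟨t, ht, hgt⟩ := this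
        exact ⟨t, ht, hgt⟩
    obtain ⟨t, ht, hgt⟩ := hexists
    -- |b - a| ≤ t
    have habt : |b - a| ≤ t := by
      have := hlip t ht 0 (by simp)
      rw [Real.dist_eq, Real.dist_eq, hg0, hgt, one_mul, sub_zero,
        abs_of_nonneg ht.1] at this
      exact this
    -- entropy bound
    have hent : Ient r (interpK h r t) ≤ (1 - t) * Ient r h := by
      have e : (1 - t) * Ient r h =
          ∫ x in UI, ∫ y in UI, (1 - t) * relEnt (h x y) (r x y) := by
        rw [dblInt_smul]; rfl
      rw [e]
      set Mη := 2 * Real.log (1/η) with hM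
      have hM0 : 0 ≤ Mη := by
        rw [hM]
        have : (1:ℝ) ≤ 1/η := by
          rw [le_div_iff₀ H.hη]; linarith [H.η_le]
        have := Real.log_nonneg this
        linarith
      have hker1 : KerBdd (fun x y => relEnt (interpK h r t x y) (r x y)) Mη :=
        relEnt_kerBdd H (interpK_graphon H hG ht)
      have hker2 : KerBdd (fun x y => (1 - t) * relEnt (h x y) (r x y)) Mη := by
        have hbase := relEnt_kerBdd H hG
        refine ⟨((measurable_const.mul hbase.1) : ), fun x hx y hy => ?_⟩
        rw [abs_mul]
        calc |1 - t| * |relEnt (h x y) (r x y)| ≤ 1 * Mη := by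
              apply mul_le_mul _ (hbase.2 x hx y hy) (abs_nonneg _) (by norm_num)
              rw [abs_of_nonneg (by linarith [ht.2])]
              linarith [ht.1]
          _ = Mη := one_mul _
      refine dblInt_mono hker1 hker2 ?_
      intro x hx y hy
      exact relEnt_interp (h x y) (r x y) t (hG.2.2 x hx y hy) (H.mem_Ioo hx hy) ht
    -- membership and conclusion
    have hmem : Ient r (interpK h r t) ∈ psiSet r b :=
      ⟨interpK h r t, interpK_graphon H hG ht, hgt, rfl⟩
    have hψb : psiRate r b ≤ Ient r (interpK h r t) := by
      rw [psiRate_eq]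
      exact csInf_le (psiSet_bddBelow H b) hmem
    have hc0 : 0 ≤ c := he ▸ Ient_nonneg H hG
    calc psiRate r b ≤ Ient r (interpK h r t) := hψb
      _ ≤ (1 - t) * Ient r h := hent
      _ = (1 - t) * c := by rw [he]
      _ ≤ (1 - |b - a|) * c := by
          apply mul_le_mul_of_nonneg_right _ hc0
          linarith
  -- step 2 : conclude
  rcases eq_or_lt_of_le (by linarith : (0:ℝ) ≤ 1 - |b - a|) with h0 | h0
  · obtain ⟨c0, hc0⟩ := psiSet_nonempty H ha
    have := step c0 hc0
    rw [← h0] at this ⊢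
    simpa using this
  · rw [psiRate_eq r a]
    have : psiRate r b / (1 - |b - a|) ≤ sInf (psiSet r a) := by
      apply le_csInf (psiSet_nonempty H ha)
      intro c hc
      rw [div_le_iff₀ h0]
      calc psiRate r b ≤ (1 - |b - a|) * c := step c hc
        _ = c * (1 - |b - a|) := mul_comm _ _
    calc psiRate r b = psiRate r b / (1 - |b - a|) * (1 - |b - a|) := by
          field_simp
      _ ≤ sInf (psiSet r a) * (1 - |b - a|) := by
          apply mul_le_mul_of_nonneg_right this (le_of_lt h0)
      _ = (1 - |b - a|) * sInf (psiSet r a) := mul_comm _ _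

end Main2


/-- ψ_r is strictly decreasing on [0, C_r] and strictly increasing on [C_r, 1]. -/
theorem psi_strictAntiOn_strictMonoOn
    (r : ℝ → ℝ → ℝ) (η : ℝ) (hη : 0 < η)
    (hrmeas : Measurable (Function.uncurry r))
    (hrsymm : ∀ x y, r x y = r y x)
    (hrbound : ∀ x ∈ UI, ∀ y ∈ UI, r x y ∈ Set.Icc η (1 - η)) :
    StrictAntiOn (psiRate r) (Set.Icc 0 (gOpNorm r)) ∧
      StrictMonoOn (psiRate r) (Set.Icc (gOpNorm r) 1) := by
  have H : RefHyp r η := ⟨hη, hrmeas, hrsymm, hrbound⟩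
  have hC0 : 0 ≤ gOpNorm r := gOpNorm_nonneg' r H.ker
  have hC1 : gOpNorm r ≤ 1 := gOpNorm_le_one H.ker
  constructor
  · intro a ha b hb hab
    have ha1 : a ∈ Set.Icc (0:ℝ) 1 := ⟨ha.1, le_trans ha.2 hC1⟩
    have hbtw : b ∈ Set.Icc (min a (gOpNorm r)) (max a (gOpNorm r)) := by
      rw [min_eq_left ha.2, max_eq_right ha.2]
      exact ⟨le_of_lt hab, hb.2⟩
    have hkey := psi_le_interp H ha1 hbtw
    rw [abs_of_pos (by linarith : (0:ℝ) < b - a)] at hkey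
    have hCa : 0 < gOpNorm r - a := by linarith [hb.2]
    have hpos : 0 < psiRate r a := by
      have h1 := psi_lower H ha1
      have h2 := pow_pos hCa 2
      linarith
    nlinarith [mul_pos (sub_pos.mpr hab) hpos]
  · intro a ha b hb hab
    have hb1 : b ∈ Set.Icc (0:ℝ) 1 := ⟨le_trans hC0 hb.1, hb.2⟩
    have hbtw : a ∈ Set.Icc (min b (gOpNorm r)) (max b (gOpNorm r)) := by
      rw [min_eq_right hb.1, max_eq_left hb.1]
      exact ⟨ha.1, le_of_lt hab⟩
    have hkey := psi_le_interp H hb1 hbtw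
    rw [abs_of_neg (by linarith : a - b < 0), neg_sub] at hkey
    have hCb : 0 < b - gOpNorm r := by linarith [ha.1]
    have hpos : 0 < psiRate r b := by
      have h1 := psi_lower H hb1
      have h2 := pow_pos hCb 2
      nlinarith
    nlinarith [mul_pos (sub_pos.mpr hab) hpos]
end

section
/- Let r be a graphon with η ≤ r ≤ 1−η on [0,1]^2 for some η > 0, let B ⊆ [0,1]^2 be measurable, let α > 0, and let Δ:[0,1]^2→ℝ be bounded, measurable and symmetric. Then lim_{ε→0^+} ε^{−2α} ∫_B R(r(x,y)+ε^αΔ(x,y) | r(x,y)) dx dy = ∫_B Δ(x,y)^2/(2 r(x,y)(1−r(x,y))) dx dy. In particular, taking α = 1 and B = [0,1]^2, I_r(r+εΔ) = (1+o(1)) · 2ε^2 ∫_{[0,1]^2} Δ^2/(4r(1−r)) as ε→0. -/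
open MeasureTheory Real Filter Set Topology

lemma log_taylor {u : ℝ} (hu : |u| ≤ 1/2) :
    |Real.log (1 + u) - (u - u ^ 2 / 2)| ≤ 2 * |u| ^ 3 := by
  have h1 : |(-u)| < 1 := by rw [abs_neg]; linarith [abs_nonneg u]
  have h := Real.abs_log_sub_add_sum_range_le h1 2
  have e : (∑ i ∈ Finset.range 2, (-u) ^ (i + 1) / (i + 1)) + Real.log (1 - -u)
      = Real.log (1 + u) - (u - u ^ 2 / 2) := by
    rw [show (1 : ℝ) - -u = 1 + u by ring]
    simp [Finset.sum_range_succ]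
    ring
  rw [e, abs_neg] at h
  norm_num at h
  refine h.trans ?_
  rw [div_le_iff₀ (by linarith)]
  nlinarith [abs_nonneg u, pow_nonneg (abs_nonneg u) 3]

set_option maxHeartbeats 1000000 in
lemma relEnt_quad {η b t : ℝ} (hη : 0 < η) (hb1 : η ≤ b) (hb2 : b ≤ 1 - η)
    (ht : |t| ≤ η / 2) :
    |relEnt (b + t) b - t ^ 2 / (2 * b * (1 - b))| ≤ 5 / η ^ 3 * |t| ^ 3 := by
  have hηhalf : η ≤ 1 / 2 := by linarith
  have hb0 : 0 < b := lt_of_lt_of_le hη hb1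
  have hb1' : 0 < 1 - b := by linarith
  have htb : -(η/2) ≤ t ∧ t ≤ η/2 := abs_le.mp ht
  set u : ℝ := t / b with hu
  set v : ℝ := -t / (1 - b) with hv
  have hu2 : |u| ≤ 1 / 2 := by
    rw [hu, abs_div, abs_of_pos hb0, div_le_iff₀ hb0]
    calc |t| ≤ η / 2 := ht
      _ ≤ 1 / 2 * b := by linarith
  have hv2 : |v| ≤ 1 / 2 := by
    rw [hv, abs_div, abs_neg, abs_of_pos hb1', div_le_iff₀ hb1']
    calc |t| ≤ η / 2 := ht
      _ ≤ 1 / 2 * (1 - b) := by linarith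
  have E1 := log_taylor hu2
  have E2 := log_taylor hv2
  set e1 : ℝ := Real.log (1 + u) - (u - u ^ 2 / 2) with he1
  set e2 : ℝ := Real.log (1 + v) - (v - v ^ 2 / 2) with he2
  -- rewrite the logs
  have hlog1 : Real.log ((b + t) / b) = Real.log (1 + u) := by
    rw [hu]; congr 1; field_simp
  have hlog2 : Real.log ((1 - (b + t)) / (1 - b)) = Real.log (1 + v) := by
    rw [hv]; congr 1; field_simp; ring
  have hiden : relEnt (b + t) b - t ^ 2 / (2 * b * (1 - b))
      = (b + t) * e1 + (1 - b - t) * e2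
        + t ^ 3 * (1 / (2 * (1 - b) ^ 2) - 1 / (2 * b ^ 2)) := by
    rw [relEnt, hlog1, hlog2, he1, he2, hu, hv]
    field_simp
    ring
  rw [hiden]
  have habs1 : |b + t| ≤ 1 := by
    rw [abs_le]; constructor <;> nlinarith [htb.1, htb.2]
  have habs2 : |1 - b - t| ≤ 1 := by
    rw [abs_le]; constructor <;> nlinarith [htb.1, htb.2]
  have hudiv : |u| ≤ |t| / η := by
    rw [hu, abs_div, abs_of_pos hb0]
    exact div_le_div_of_nonneg_left (abs_nonneg t) hη hb1
  have hvdiv : |v| ≤ |t| / η := by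
    rw [hv, abs_div, abs_neg, abs_of_pos hb1']
    exact div_le_div_of_nonneg_left (abs_nonneg t) hη (by linarith)
  have hbnd1 : |e1| ≤ 2 * (|t| ^ 3 / η ^ 3) := by
    refine E1.trans ?_
    rw [← div_pow]
    have := pow_le_pow_left₀ (abs_nonneg u) hudiv 3
    linarith
  have hbnd2 : |e2| ≤ 2 * (|t| ^ 3 / η ^ 3) := by
    refine E2.trans ?_
    rw [← div_pow]
    have := pow_le_pow_left₀ (abs_nonneg v) hvdiv 3
    linarith
  have hcube : |t ^ 3 * (1 / (2 * (1 - b) ^ 2) - 1 / (2 * b ^ 2))| ≤ |t| ^ 3 / η ^ 3 := by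
    rw [abs_mul, abs_pow]
    have p0 : (0:ℝ) < 2 * η ^ 2 := by positivity
    have q1 : (1:ℝ) / (2 * (1 - b) ^ 2) ≤ 1 / (2 * η ^ 2) :=
      one_div_le_one_div_of_le p0 (by nlinarith)
    have q2 : (1:ℝ) / (2 * b ^ 2) ≤ 1 / (2 * η ^ 2) :=
      one_div_le_one_div_of_le p0 (by nlinarith)
    have r1 : (0:ℝ) < 1 / (2 * (1 - b) ^ 2) := by positivity
    have r2 : (0:ℝ) < 1 / (2 * b ^ 2) := by positivity
    have hsum : (1:ℝ) / (2 * η ^ 2) + 1 / (2 * η ^ 2) = 1 / η ^ 2 := by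
      field_simp
      norm_num
    have h1 : |1 / (2 * (1 - b) ^ 2) - 1 / (2 * b ^ 2)| ≤ 1 / η ^ 2 := by
      rw [abs_le]; constructor <;> linarith
    calc |t| ^ 3 * |1 / (2 * (1 - b) ^ 2) - 1 / (2 * b ^ 2)|
        ≤ |t| ^ 3 * (1 / η ^ 3) := by
          refine mul_le_mul_of_nonneg_left (h1.trans ?_) (pow_nonneg (abs_nonneg t) 3)
          refine one_div_le_one_div_of_le (by positivity) ?_
          nlinarith
      _ = |t| ^ 3 / η ^ 3 := by ring
  have key : |(b + t) * e1 + (1 - b - t) * e2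
      + t ^ 3 * (1 / (2 * (1 - b) ^ 2) - 1 / (2 * b ^ 2))|
      ≤ 1 * (2 * (|t| ^ 3 / η ^ 3)) + 1 * (2 * (|t| ^ 3 / η ^ 3)) + |t| ^ 3 / η ^ 3 := by
    calc |(b + t) * e1 + (1 - b - t) * e2
        + t ^ 3 * (1 / (2 * (1 - b) ^ 2) - 1 / (2 * b ^ 2))|
        ≤ |(b + t) * e1 + (1 - b - t) * e2|
          + |t ^ 3 * (1 / (2 * (1 - b) ^ 2) - 1 / (2 * b ^ 2))| := abs_add_le _ _
      _ ≤ (|(b + t) * e1| + |(1 - b - t) * e2|)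
          + |t ^ 3 * (1 / (2 * (1 - b) ^ 2) - 1 / (2 * b ^ 2))| := by
          gcongr
          exact abs_add_le _ _
      _ ≤ 1 * (2 * (|t| ^ 3 / η ^ 3)) + 1 * (2 * (|t| ^ 3 / η ^ 3)) + |t| ^ 3 / η ^ 3 := by
          have m1 : |(b + t) * e1| ≤ 1 * (2 * (|t| ^ 3 / η ^ 3)) := by
            rw [abs_mul]
            exact mul_le_mul habs1 hbnd1 (abs_nonneg _) (by norm_num)
          have m2 : |(1 - b - t) * e2| ≤ 1 * (2 * (|t| ^ 3 / η ^ 3)) := by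
            rw [abs_mul]
            exact mul_le_mul habs2 hbnd2 (abs_nonneg _) (by norm_num)
          linarith [hcube]
  refine key.trans (le_of_eq ?_)
  field_simp
  ring

section Aux
variable {r Δ : ℝ → ℝ → ℝ} {η M : ℝ}

lemma meas_relEnt_comp (hrmeas : Measurable (Function.uncurry r))
    (hΔmeas : Measurable (Function.uncurry Δ)) (δ : ℝ) :
    Measurable (fun p : ℝ × ℝ => relEnt (r p.1 p.2 + δ * Δ p.1 p.2) (r p.1 p.2)) := by
  have h1 : Measurable (fun p : ℝ × ℝ => r p.1 p.2) := hrmeas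
  have h2 : Measurable (fun p : ℝ × ℝ => Δ p.1 p.2) := hΔmeas
  have ha : Measurable (fun p : ℝ × ℝ => r p.1 p.2 + δ * Δ p.1 p.2) :=
    h1.add (measurable_const.mul h2)
  unfold relEnt
  exact (ha.mul ((ha.div h1).log)).add
    ((measurable_const.sub ha).mul
      (((measurable_const.sub ha).div (measurable_const.sub h1)).log))

lemma meas_gfun (hrmeas : Measurable (Function.uncurry r))
    (hΔmeas : Measurable (Function.uncurry Δ)) :
    Measurable (fun p : ℝ × ℝ => (Δ p.1 p.2) ^ 2 / (2 * r p.1 p.2 * (1 - r p.1 p.2))) := by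
  have h1 : Measurable (fun p : ℝ × ℝ => r p.1 p.2) := hrmeas
  have h2 : Measurable (fun p : ℝ × ℝ => Δ p.1 p.2) := hΔmeas
  exact (h2.pow_const 2).div ((measurable_const.mul h1).mul (measurable_const.sub h1))

lemma vol_UIUI : volume (UI ×ˢ UI) < ⊤ := by
  rw [UI, Icc_prod_Icc]
  exact isCompact_Icc.measure_lt_top
end Aux

section Main
variable {r Δ : ℝ → ℝ → ℝ} {η M : ℝ}

lemma relEnt_bound {η b t : ℝ} (hη : 0 < η) (hb1 : η ≤ b) (hb2 : b ≤ 1 - η)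
    (ht : |t| ≤ η / 2) : |relEnt (b + t) b| ≤ 1 := by
  have h1 := relEnt_quad hη hb1 hb2 ht
  have hb0 : 0 < b := lt_of_lt_of_le hη hb1
  have hb1' : 0 < 1 - b := by linarith
  have hq : t ^ 2 / (2 * b * (1 - b)) ≤ 1 / 8 := by
    have ht2 : t ^ 2 ≤ η ^ 2 / 4 := by
      have := sq_abs t
      nlinarith [abs_nonneg t]
    have hd : 2 * η ^ 2 ≤ 2 * b * (1 - b) := by nlinarith
    calc t ^ 2 / (2 * b * (1 - b)) ≤ (η ^ 2 / 4) / (2 * η ^ 2) := by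
          apply div_le_div₀ (by positivity) ht2 (by positivity) hd
      _ = 1 / 8 := by field_simp; ring
  have hc : 5 / η ^ 3 * |t| ^ 3 ≤ 5 / 8 := by
    have ht3 : |t| ^ 3 ≤ η ^ 3 / 8 := by
      have := pow_le_pow_left₀ (abs_nonneg t) ht 3
      calc |t| ^ 3 ≤ (η / 2) ^ 3 := this
        _ = η ^ 3 / 8 := by ring
    calc 5 / η ^ 3 * |t| ^ 3 ≤ 5 / η ^ 3 * (η ^ 3 / 8) := by
          exact mul_le_mul_of_nonneg_left ht3 (by positivity)
      _ = 5 / 8 := by field_simp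
  have habs := abs_sub_abs_le_abs_sub (relEnt (b + t) b) (t ^ 2 / (2 * b * (1 - b)))
  have : |t ^ 2 / (2 * b * (1 - b))| = t ^ 2 / (2 * b * (1 - b)) :=
    abs_of_nonneg (by positivity)
  linarith

lemma integrableOn_relEnt (hη : 0 < η)
    (hrmeas : Measurable (Function.uncurry r))
    (hrbound : ∀ x ∈ UI, ∀ y ∈ UI, r x y ∈ Set.Icc η (1 - η))
    (hΔmeas : Measurable (Function.uncurry Δ))
    (hΔbdd : ∀ x y, |Δ x y| ≤ M)
    {δ : ℝ} (hδ : |δ| * M ≤ η / 2) :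
    IntegrableOn (fun p : ℝ × ℝ => relEnt (r p.1 p.2 + δ * Δ p.1 p.2) (r p.1 p.2))
      (UI ×ˢ UI) := by
  refine Integrable.mono' (g := fun _ => (1:ℝ))
    (integrableOn_const vol_UIUI.ne)
    ((meas_relEnt_comp hrmeas hΔmeas δ).aestronglyMeasurable) ?_
  have hUIm : MeasurableSet (UI ×ˢ UI) :=
    MeasurableSet.prod (by rw [UI]; exact measurableSet_Icc) (by rw [UI]; exact measurableSet_Icc)
  rw [ae_restrict_iff' hUIm]
  refine Eventually.of_forall fun p hp => ?_
  obtain ⟨hp1, hp2⟩ := hp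
  obtain ⟨hb1, hb2⟩ := hrbound p.1 hp1 p.2 hp2
  have ht : |δ * Δ p.1 p.2| ≤ η / 2 := by
    rw [abs_mul]
    calc |δ| * |Δ p.1 p.2| ≤ |δ| * M :=
          mul_le_mul_of_nonneg_left (hΔbdd _ _) (abs_nonneg δ)
      _ ≤ η / 2 := hδ
  simpa [Real.norm_eq_abs] using relEnt_bound hη hb1 hb2 ht

lemma integrableOn_gfun (hη : 0 < η)
    (hrmeas : Measurable (Function.uncurry r))
    (hrbound : ∀ x ∈ UI, ∀ y ∈ UI, r x y ∈ Set.Icc η (1 - η))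
    (hΔmeas : Measurable (Function.uncurry Δ))
    (hΔbdd : ∀ x y, |Δ x y| ≤ M) :
    IntegrableOn (fun p : ℝ × ℝ => (Δ p.1 p.2) ^ 2 / (2 * r p.1 p.2 * (1 - r p.1 p.2)))
      (UI ×ˢ UI) := by
  refine Integrable.mono' (g := fun _ => M ^ 2 / (2 * η ^ 2))
    (integrableOn_const vol_UIUI.ne)
    ((meas_gfun hrmeas hΔmeas).aestronglyMeasurable) ?_
  have hUIm : MeasurableSet (UI ×ˢ UI) :=
    MeasurableSet.prod (by rw [UI]; exact measurableSet_Icc) (by rw [UI]; exact measurableSet_Icc)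
  rw [ae_restrict_iff' hUIm]
  refine Eventually.of_forall fun p hp => ?_
  obtain ⟨hp1, hp2⟩ := hp
  obtain ⟨hb1, hb2⟩ := hrbound p.1 hp1 p.2 hp2
  have hb0 : 0 < r p.1 p.2 := lt_of_lt_of_le hη hb1
  have hb1' : 0 < 1 - r p.1 p.2 := by linarith
  have hnum : (Δ p.1 p.2) ^ 2 ≤ M ^ 2 := by
    have := sq_abs (Δ p.1 p.2)
    nlinarith [hΔbdd p.1 p.2, abs_nonneg (Δ p.1 p.2)]
  have hden : 2 * η ^ 2 ≤ 2 * r p.1 p.2 * (1 - r p.1 p.2) := by nlinarith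
  rw [Real.norm_eq_abs, abs_of_nonneg (by positivity)]
  exact div_le_div₀ (by positivity) hnum (by positivity) hden
end Main

set_option maxHeartbeats 1000000 in
lemma aux_tendsto (hη : 0 < η)
    (hrmeas : Measurable (Function.uncurry r))
    (hrbound : ∀ x ∈ UI, ∀ y ∈ UI, r x y ∈ Set.Icc η (1 - η))
    {B : Set (ℝ × ℝ)} (hB : MeasurableSet B) (hBsub : B ⊆ UI ×ˢ UI)
    (hΔmeas : Measurable (Function.uncurry Δ))
    (hΔbdd : ∀ x y, |Δ x y| ≤ M) :
    Filter.Tendsto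
      (fun δ : ℝ => (δ ^ 2)⁻¹ *
        ∫ p in B, relEnt (r p.1 p.2 + δ * Δ p.1 p.2) (r p.1 p.2))
      (nhdsWithin 0 (Set.Ioi 0))
      (nhds (∫ p in B, (Δ p.1 p.2) ^ 2 / (2 * r p.1 p.2 * (1 - r p.1 p.2)))) := by
  have hM : 0 ≤ M := le_trans (abs_nonneg _) (hΔbdd 0 0)
  set g : ℝ × ℝ → ℝ := fun p => (Δ p.1 p.2) ^ 2 / (2 * r p.1 p.2 * (1 - r p.1 p.2)) with hg
  set L : ℝ := ∫ p in B, g p with hL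
  have hgint : IntegrableOn g B :=
    (integrableOn_gfun hη hrmeas hrbound hΔmeas hΔbdd).mono_set hBsub
  set C : ℝ := 5 / η ^ 3 * M ^ 3 * (volume B).toReal with hC
  have hC0 : 0 ≤ C := by
    rw [hC]; positivity
  set δ₀ : ℝ := η / (2 * (M + 1)) with hδ₀
  have hδ₀pos : 0 < δ₀ := by rw [hδ₀]; positivity
  have key : ∀ δ : ℝ, δ ∈ Set.Ioc 0 δ₀ →
      |(δ ^ 2)⁻¹ * (∫ p in B, relEnt (r p.1 p.2 + δ * Δ p.1 p.2) (r p.1 p.2)) - L|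
        ≤ C * δ := by
    intro δ hδ
    obtain ⟨hδ0, hδ1⟩ := hδ
    have hδM : δ * M ≤ η / 2 := by
      rw [hδ₀, le_div_iff₀ (by positivity)] at hδ1
      nlinarith
    have habsδM : |δ| * M ≤ η / 2 := by rwa [abs_of_pos hδ0]
    have hfint : IntegrableOn
        (fun p : ℝ × ℝ => relEnt (r p.1 p.2 + δ * Δ p.1 p.2) (r p.1 p.2)) B :=
      (integrableOn_relEnt hη hrmeas hrbound hΔmeas hΔbdd habsδM).mono_set hBsub
    -- pointwise bound
    have hpt : ∀ p ∈ B,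
        ‖relEnt (r p.1 p.2 + δ * Δ p.1 p.2) (r p.1 p.2) - δ ^ 2 * g p‖
          ≤ 5 / η ^ 3 * M ^ 3 * δ ^ 3 := by
      intro p hp
      obtain ⟨hp1, hp2⟩ := hBsub hp
      obtain ⟨hb1, hb2⟩ := hrbound p.1 hp1 p.2 hp2
      have ht : |δ * Δ p.1 p.2| ≤ η / 2 := by
        rw [abs_mul]
        calc |δ| * |Δ p.1 p.2| ≤ |δ| * M :=
              mul_le_mul_of_nonneg_left (hΔbdd _ _) (abs_nonneg δ)
          _ ≤ η / 2 := habsδM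
      have hq := relEnt_quad hη hb1 hb2 ht
      have he : (δ * Δ p.1 p.2) ^ 2 / (2 * r p.1 p.2 * (1 - r p.1 p.2)) = δ ^ 2 * g p := by
        rw [hg]; ring
      rw [he] at hq
      have hcube : |δ * Δ p.1 p.2| ^ 3 ≤ M ^ 3 * δ ^ 3 := by
        have h1 : |δ * Δ p.1 p.2| ≤ δ * M := by
          rw [abs_mul, abs_of_pos hδ0]
          exact mul_le_mul_of_nonneg_left (hΔbdd _ _) hδ0.le
        calc |δ * Δ p.1 p.2| ^ 3 ≤ (δ * M) ^ 3 :=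
              pow_le_pow_left₀ (abs_nonneg _) h1 3
          _ = M ^ 3 * δ ^ 3 := by ring
      rw [Real.norm_eq_abs]
      calc |relEnt (r p.1 p.2 + δ * Δ p.1 p.2) (r p.1 p.2) - δ ^ 2 * g p|
          ≤ 5 / η ^ 3 * |δ * Δ p.1 p.2| ^ 3 := hq
        _ ≤ 5 / η ^ 3 * (M ^ 3 * δ ^ 3) :=
            mul_le_mul_of_nonneg_left hcube (by positivity)
        _ = 5 / η ^ 3 * M ^ 3 * δ ^ 3 := by ring
    have hBfin : volume B < ⊤ := lt_of_le_of_lt (measure_mono hBsub) vol_UIUI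
    have hIsub : ∫ p in B, (relEnt (r p.1 p.2 + δ * Δ p.1 p.2) (r p.1 p.2) - δ ^ 2 * g p)
        = (∫ p in B, relEnt (r p.1 p.2 + δ * Δ p.1 p.2) (r p.1 p.2)) - δ ^ 2 * L := by
      rw [integral_sub hfint (hgint.const_mul _), integral_const_mul, hL]
    have hnorm : ‖∫ p in B, (relEnt (r p.1 p.2 + δ * Δ p.1 p.2) (r p.1 p.2) - δ ^ 2 * g p)‖
        ≤ 5 / η ^ 3 * M ^ 3 * δ ^ 3 * (volume B).toReal := by
      apply norm_setIntegral_le_of_norm_le_const_ae' hBfin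
      exact Eventually.of_forall hpt
    rw [hIsub, Real.norm_eq_abs] at hnorm
    have hrw : (δ ^ 2)⁻¹ * (∫ p in B, relEnt (r p.1 p.2 + δ * Δ p.1 p.2) (r p.1 p.2)) - L
        = (δ ^ 2)⁻¹ * ((∫ p in B, relEnt (r p.1 p.2 + δ * Δ p.1 p.2) (r p.1 p.2))
            - δ ^ 2 * L) := by
      field_simp
    rw [hrw, abs_mul, abs_of_pos (by positivity : (0:ℝ) < (δ ^ 2)⁻¹)]
    calc (δ ^ 2)⁻¹ * |(∫ p in B, relEnt (r p.1 p.2 + δ * Δ p.1 p.2) (r p.1 p.2)) - δ ^ 2 * L|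
        ≤ (δ ^ 2)⁻¹ * (5 / η ^ 3 * M ^ 3 * δ ^ 3 * (volume B).toReal) := by
          exact mul_le_mul_of_nonneg_left hnorm (by positivity)
      _ = C * δ := by rw [hC]; field_simp
  rw [← tendsto_sub_nhds_zero_iff]
  apply squeeze_zero_norm' (a := fun δ => C * δ)
  · filter_upwards [Ioc_mem_nhdsGT_of_mem ⟨le_refl (0:ℝ), hδ₀pos⟩] with δ hδ
    simpa [Real.norm_eq_abs] using key δ hδ
  · have : Filter.Tendsto (fun δ : ℝ => C * δ) (nhds 0) (nhds (C * 0)) :=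
      (continuous_const.mul continuous_id).tendsto 0
    simpa using this.mono_left nhdsWithin_le_nhds


set_option maxHeartbeats 1000000 in
/-- cost of a small perturbation ε^α·Δ on a region B, and the special case
α = 1, B = [0,1]². -/
theorem cost_of_small_perturbations
    (r : ℝ → ℝ → ℝ) (η : ℝ) (hη : 0 < η)
    (hrmeas : Measurable (Function.uncurry r))
    (hrsymm : ∀ x y, r x y = r y x)
    (hrbound : ∀ x ∈ UI, ∀ y ∈ UI, r x y ∈ Set.Icc η (1 - η))
    (B : Set (ℝ × ℝ)) (hB : MeasurableSet B) (hBsub : B ⊆ UI ×ˢ UI)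
    (α : ℝ) (hα : 0 < α)
    (Δ : ℝ → ℝ → ℝ)
    (hΔmeas : Measurable (Function.uncurry Δ))
    (hΔsymm : ∀ x y, Δ x y = Δ y x)
    (M : ℝ) (hΔbdd : ∀ x y, |Δ x y| ≤ M) :
    Filter.Tendsto
      (fun ε : ℝ => (ε ^ (2 * α))⁻¹ *
        ∫ p in B, relEnt (r p.1 p.2 + ε ^ α * Δ p.1 p.2) (r p.1 p.2))
      (nhdsWithin 0 (Set.Ioi 0))
      (nhds (∫ p in B, (Δ p.1 p.2) ^ 2 / (2 * r p.1 p.2 * (1 - r p.1 p.2)))) ∧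
    Filter.Tendsto
      (fun ε : ℝ => (ε ^ 2)⁻¹ * Ient r (fun x y => r x y + ε * Δ x y))
      (nhdsWithin 0 (Set.Ioi 0))
      (nhds (2 * ∫ x in UI, ∫ y in UI, (Δ x y) ^ 2 / (4 * r x y * (1 - r x y)))) := by
  have hM : 0 ≤ M := le_trans (abs_nonneg _) (hΔbdd 0 0)
  have hUIm : MeasurableSet (UI ×ˢ UI) :=
    MeasurableSet.prod (by rw [UI]; exact measurableSet_Icc) (by rw [UI]; exact measurableSet_Icc)
  constructor
  · -- part 1
    have haux := aux_tendsto hη hrmeas hrbound hB hBsub hΔmeas hΔbdd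
    have hcomp : Filter.Tendsto (fun ε : ℝ => ε ^ α) (nhdsWithin 0 (Set.Ioi 0))
        (nhdsWithin 0 (Set.Ioi 0)) := by
      apply tendsto_nhdsWithin_of_tendsto_nhds_of_eventually_within
      · have hc := (Real.continuousAt_rpow_const 0 α (Or.inr hα.le)).tendsto
        rw [Real.zero_rpow hα.ne'] at hc
        exact hc.mono_left nhdsWithin_le_nhds
      · filter_upwards [self_mem_nhdsWithin] with ε hε
        exact Real.rpow_pos_of_pos hε α
    refine Filter.Tendsto.congr' ?_ (haux.comp hcomp)
    filter_upwards [self_mem_nhdsWithin] with ε hε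
    have h2 : ε ^ (2 * α) = (ε ^ α) ^ 2 := by
      rw [mul_comm, Real.rpow_mul (le_of_lt hε), show ((2:ℝ)) = ((2:ℕ):ℝ) by norm_num,
        Real.rpow_natCast]
    simp only [Function.comp_apply, h2]
  · -- part 2
    have haux := aux_tendsto hη hrmeas hrbound hUIm (subset_refl _) hΔmeas hΔbdd
    have hδ₀pos : (0:ℝ) < η / (2 * (M + 1)) := by positivity
    -- rewrite the limit value
    have hgfub : (∫ p in UI ×ˢ UI, (Δ p.1 p.2) ^ 2 / (2 * r p.1 p.2 * (1 - r p.1 p.2)))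
        = ∫ x in UI, ∫ y in UI, (Δ x y) ^ 2 / (2 * r x y * (1 - r x y)) := by
      have hint := integrableOn_gfun hη hrmeas hrbound hΔmeas hΔbdd
      rw [Measure.volume_eq_prod]
      exact setIntegral_prod _ (by rwa [← Measure.volume_eq_prod])
    have hval : (2 * ∫ x in UI, ∫ y in UI, (Δ x y) ^ 2 / (4 * r x y * (1 - r x y)))
        = ∫ p in UI ×ˢ UI, (Δ p.1 p.2) ^ 2 / (2 * r p.1 p.2 * (1 - r p.1 p.2)) := by
      rw [hgfub]
      have hpt : ∀ x y : ℝ, (Δ x y) ^ 2 / (2 * r x y * (1 - r x y))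
          = 2 * ((Δ x y) ^ 2 / (4 * r x y * (1 - r x y))) := by
        intro x y
        rcases eq_or_ne (r x y * (1 - r x y)) 0 with h | h
        · simp [show 2 * r x y * (1 - r x y) = 2 * (r x y * (1 - r x y)) by ring,
            show 4 * r x y * (1 - r x y) = 4 * (r x y * (1 - r x y)) by ring, h]
        · obtain ⟨hc, hd⟩ := mul_ne_zero_iff.mp h
          field_simp
          ring
      rw [← integral_const_mul]
      refine integral_congr_ae (Eventually.of_forall fun x => ?_)
      beta_reduce
      rw [← integral_const_mul]
      exact integral_congr_ae (Eventually.of_forall fun y => ((hpt x y).symm : _))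
    rw [hval]
    refine Filter.Tendsto.congr' ?_ haux
    filter_upwards [Ioc_mem_nhdsGT_of_mem ⟨le_refl (0:ℝ), hδ₀pos⟩] with ε hε
    obtain ⟨hε0, hε1⟩ := hε
    have habsεM : |ε| * M ≤ η / 2 := by
      rw [abs_of_pos hε0]
      rw [le_div_iff₀ (by positivity)] at hε1
      nlinarith
    have hint := integrableOn_relEnt hη hrmeas hrbound hΔmeas hΔbdd habsεM
    have hfub : (∫ p in UI ×ˢ UI, relEnt (r p.1 p.2 + ε * Δ p.1 p.2) (r p.1 p.2))
        = ∫ x in UI, ∫ y in UI, relEnt (r x y + ε * Δ x y) (r x y) := by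
      rw [Measure.volume_eq_prod]
      exact setIntegral_prod _ (by rwa [← Measure.volume_eq_prod])
    rw [hfub, Ient]
end

section
/- Let Δ:[0,1]^2→[0,1] be measurable and symmetric, so that 1−Δ is a graphon, and suppose ‖T_{1−Δ}‖ = 1−ε for some ε ∈ (0,1). Then ‖Δ‖_1 ≤ ε(2−ε), where ‖Δ‖_1 = ∫_{[0,1]^2} Δ. -/
open MeasureTheory Real Filter Set Topology

/-- if ‖T_{1−Δ}‖ = 1−ε then ‖Δ‖₁ ≤ ε(2−ε). -/
theorem L1_bound_near_one
    (Δ : ℝ → ℝ → ℝ)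
    (hΔmeas : Measurable (Function.uncurry Δ))
    (hΔsymm : ∀ x y, Δ x y = Δ y x)
    (hΔrange : ∀ x ∈ UI, ∀ y ∈ UI, Δ x y ∈ Set.Icc (0:ℝ) 1)
    (ε : ℝ) (hε : ε ∈ Set.Ioo (0:ℝ) 1)
    (hnorm : gOpNorm (fun x y => 1 - Δ x y) = 1 - ε) :
    (∫ x in UI, ∫ y in UI, Δ x y) ≤ ε * (2 - ε) := by
  obtain ⟨hε0, hε1⟩ := hε
  set μ : Measure ℝ := volume.restrict UI with hμdef
  have hUImeas : MeasurableSet UI := measurableSet_Icc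
  have hμuniv : μ Set.univ = 1 := by
    simp [hμdef, Measure.restrict_apply_univ, UI, Real.volume_Icc]
  have hprob : IsProbabilityMeasure μ := ⟨hμuniv⟩
  set P : Measure (ℝ × ℝ) := μ.prod μ with hPdef
  have hPprob : IsProbabilityMeasure P := by rw [hPdef]; infer_instance
  -- the kernel h = 1 - Δ as a function on the product
  set H : ℝ × ℝ → ℝ := fun p => 1 - Δ p.1 p.2 with hHdef
  have hHmeas : Measurable H := measurable_const.sub hΔmeas
  have haeP : ∀ᵐ p ∂P, p.1 ∈ UI ∧ p.2 ∈ UI := by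
    have hre : P = (volume.prod volume).restrict (UI ×ˢ UI) := by
      rw [hPdef, hμdef, Measure.prod_restrict]
    rw [hre]
    filter_upwards [ae_restrict_mem (hUImeas.prod hUImeas)] with p hp using hp
  have hHmem : ∀ᵐ p ∂P, H p ∈ Set.Icc (0:ℝ) 1 := by
    filter_upwards [haeP] with p hp
    have := hΔrange p.1 hp.1 p.2 hp.2
    constructor <;> simp only [hHdef] <;> [linarith [this.2]; linarith [this.1]]
  have hΔP : Measurable (fun p : ℝ × ℝ => Δ p.1 p.2) := hΔmeas
  have hΔint : Integrable (fun p : ℝ × ℝ => Δ p.1 p.2) P := by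
    refine (integrable_const (1:ℝ)).mono' hΔP.aestronglyMeasurable ?_
    filter_upwards [haeP] with p hp
    have := hΔrange p.1 hp.1 p.2 hp.2
    rw [Real.norm_eq_abs, abs_le]; exact ⟨by linarith [this.1], this.2⟩
  have hHint : Integrable H P := by
    refine (integrable_const (1:ℝ)).mono' hHmeas.aestronglyMeasurable ?_
    filter_upwards [hHmem] with p hp
    rw [Real.norm_eq_abs, abs_le]; exact ⟨by linarith [hp.1], hp.2⟩
  have hH2int : Integrable (fun p => H p ^ 2) P := by
    refine (integrable_const (1:ℝ)).mono' (hHmeas.pow_const 2).aestronglyMeasurable ?_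
    filter_upwards [hHmem] with p hp
    rw [Real.norm_eq_abs, abs_le]
    constructor
    · nlinarith [sq_nonneg (H p)]
    · nlinarith [hp.1, hp.2]
  set A : ℝ := ∫ p, H p ∂P with hAdef
  have hA0 : 0 ≤ A := integral_nonneg_of_ae (by filter_upwards [hHmem] with p hp using hp.1)
  have hH2le : (∫ p, H p ^ 2 ∂P) ≤ A := by
    refine integral_mono_ae hH2int hHint ?_
    filter_upwards [hHmem] with p hp
    nlinarith [hp.1, hp.2]
  have hconj : (2:ℝ).HolderConjugate 2 := Real.holderConjugate_iff.mpr ⟨one_lt_two, by norm_num⟩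
  -- main bound: every element of the sup set is ≤ √A
  have hbound : ∀ t ∈ {t : ℝ | ∃ u : ℝ → ℝ, Measurable u ∧
      IntegrableOn (fun x => u x ^ 2) UI ∧ (∫ x in UI, u x ^ 2) ≤ 1 ∧
      t = |∫ x in UI, ∫ y in UI, u x * (1 - Δ x y) * u y|}, t ≤ Real.sqrt A := by
    rintro t ⟨u, humeas, hu2int, hu2le, rfl⟩
    have hu2int' : Integrable (fun x => u x ^ 2) μ := hu2int
    have hu20 : 0 ≤ ∫ x in UI, u x ^ 2 := integral_nonneg fun x => sq_nonneg _
    have huL2 : MemLp u 2 μ :=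
      (memLp_two_iff_integrable_sq humeas.aestronglyMeasurable).mpr hu2int'
    have huL1 : Integrable u μ := huL2.integrable one_le_two
    set G : ℝ × ℝ → ℝ := fun p => u p.1 * u p.2 with hGdef
    have hGmeas : Measurable G := (humeas.comp measurable_fst).mul (humeas.comp measurable_snd)
    have hGint : Integrable G P := huL1.mul_prod huL1
    have hG2int : Integrable (fun p => G p ^ 2) P := by
      have := hu2int'.mul_prod hu2int'
      refine this.congr ?_
      filter_upwards with p
      simp [hGdef, mul_pow]
    have hGL2 : MemLp G 2 P :=
      (memLp_two_iff_integrable_sq hGmeas.aestronglyMeasurable).mpr hG2int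
    have hHL2 : MemLp H 2 P :=
      (memLp_two_iff_integrable_sq hHmeas.aestronglyMeasurable).mpr hH2int
    set F : ℝ × ℝ → ℝ := fun p => u p.1 * (1 - Δ p.1 p.2) * u p.2 with hFdef
    have hFeq : ∀ p, F p = G p * H p := by intro p; simp [hFdef, hGdef, hHdef]; ring
    have hFmeas : Measurable F :=
      ((humeas.comp measurable_fst).mul hHmeas).mul (humeas.comp measurable_snd)
    have hFint : Integrable F P := by
      refine (hGint.abs).mono' hFmeas.aestronglyMeasurable ?_
      filter_upwards [hHmem] with p hp
      rw [hFeq p, Real.norm_eq_abs, abs_mul]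
      have : |H p| ≤ 1 := abs_le.mpr ⟨by linarith [hp.1], hp.2⟩
      calc |G p| * |H p| ≤ |G p| * 1 := by
            exact mul_le_mul_of_nonneg_left this (abs_nonneg _)
        _ = |G p| := mul_one _
    have hfub : (∫ x in UI, ∫ y in UI, u x * (1 - Δ x y) * u y) = ∫ p, F p ∂P := by
      exact integral_integral hFint
    rw [hfub]
    have h1 : |∫ p, F p ∂P| ≤ ∫ p, ‖F p‖ ∂P := by
      simp only [Real.norm_eq_abs] at *; exact norm_integral_le_integral_norm (μ := P) F
    have h2 : (∫ p, ‖F p‖ ∂P) = ∫ p, ‖G p‖ * ‖H p‖ ∂P := by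
      congr 1; funext p; rw [hFeq p, norm_mul]
    have h3 : (∫ p, ‖G p‖ * ‖H p‖ ∂P) ≤
        (∫ p, ‖G p‖ ^ (2:ℝ) ∂P) ^ (1/(2:ℝ)) * (∫ p, ‖H p‖ ^ (2:ℝ) ∂P) ^ (1/(2:ℝ)) := by
      refine integral_mul_norm_le_Lp_mul_Lq hconj ?_ ?_
      · convert hGL2; norm_num
      · convert hHL2; norm_num
    have hnormsq : ∀ f : ℝ × ℝ → ℝ, (fun p => ‖f p‖ ^ (2:ℝ)) = fun p => f p ^ 2 := by
      intro f; funext p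
      rw [Real.norm_eq_abs, show ((2:ℝ) = ((2:ℕ):ℝ)) by norm_num, Real.rpow_natCast, sq_abs]
    rw [hnormsq G, hnormsq H] at h3
    have hGsq : (∫ p, G p ^ 2 ∂P) = (∫ x in UI, u x ^ 2) * (∫ x in UI, u x ^ 2) := by
      have : (fun p : ℝ × ℝ => G p ^ 2) = fun p : ℝ × ℝ => (u p.1 ^ 2) * (u p.2 ^ 2) := by
        funext p; simp [hGdef, mul_pow]
      rw [this, hPdef]
      exact integral_prod_mul (fun x => u x ^ 2) (fun y => u y ^ 2)
    have hGterm : (∫ p, G p ^ 2 ∂P) ^ (1/(2:ℝ)) ≤ 1 := by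
      rw [hGsq]
      refine Real.rpow_le_one (by positivity) ?_ (by norm_num)
      nlinarith
    have hHterm : (∫ p, H p ^ 2 ∂P) ^ (1/(2:ℝ)) ≤ Real.sqrt A := by
      rw [Real.sqrt_eq_rpow]
      exact Real.rpow_le_rpow (integral_nonneg fun p => sq_nonneg _) hH2le (by norm_num)
    have hG2nonneg : (0:ℝ) ≤ (∫ p, G p ^ 2 ∂P) ^ (1/(2:ℝ)) := by positivity
    calc |∫ p, F p ∂P| ≤ ∫ p, ‖G p‖ * ‖H p‖ ∂P := by rw [← h2]; exact h1
      _ ≤ (∫ p, G p ^ 2 ∂P) ^ (1/(2:ℝ)) * (∫ p, H p ^ 2 ∂P) ^ (1/(2:ℝ)) := h3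
      _ ≤ 1 * Real.sqrt A := by
          apply mul_le_mul hGterm hHterm (by positivity) (by norm_num)
      _ = Real.sqrt A := one_mul _
  -- hence gOpNorm ≤ √A
  have hzero_mem : (0:ℝ) ∈ {t : ℝ | ∃ u : ℝ → ℝ, Measurable u ∧
      IntegrableOn (fun x => u x ^ 2) UI ∧ (∫ x in UI, u x ^ 2) ≤ 1 ∧
      t = |∫ x in UI, ∫ y in UI, u x * (1 - Δ x y) * u y|} := by
    refine ⟨fun _ => 0, measurable_const, ?_, ?_, ?_⟩
    · simpa using (integrableOn_const (C := (0:ℝ)) (s := UI)).mpr (Or.inl rfl)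
    · simp
    · simp
  have hle : gOpNorm (fun x y => 1 - Δ x y) ≤ Real.sqrt A := by
    unfold gOpNorm
    exact csSup_le ⟨0, hzero_mem⟩ hbound
  rw [hnorm] at hle
  have hsq : (1 - ε)^2 ≤ A := by
    rwa [Real.le_sqrt (by linarith) hA0] at hle
  -- relate A and the integral of Δ
  have hAeq : A = 1 - ∫ p, Δ p.1 p.2 ∂P := by
    rw [hAdef]
    have : (∫ p, H p ∂P) = (∫ _p, (1:ℝ) ∂P) - ∫ p, Δ p.1 p.2 ∂P := by
      rw [← integral_sub (integrable_const 1) hΔint]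
    rw [this]
    simp
  have hΔiter : (∫ x in UI, ∫ y in UI, Δ x y) = ∫ p, Δ p.1 p.2 ∂P :=
    integral_integral hΔint
  rw [hΔiter]
  nlinarith [hsq, hAeq]
end
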